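/- arXiv:1506.00944 — 6 statements merged into one kernel-verified Lean document; each statement's English description precedes it below -/
import Mathlib

section
/- Let ℓ ≥ 2 and let G be a finite simple graph. Then G is an L-cluster graph if and only if G contains no induced subgraph isomorphic to P4 (the chordless path on 4 vertices), to the paw (the complement of P3 ∪ K1, i.e., a triangle with one pendant vertex attached), or to K_{ℓ+2} − e (the complete graph on ℓ+2 vertices minus one edge). -/
open SimpleGraph

variable {V : Type*}

/-- The graph obtained from `G` by applying the edition set `F`
(symmetric difference of the edge set with `F`). -/
def editGraph (G : SimpleGraph V) (F : Finset (Sym2 V)) : SimpleGraph V :=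
  SimpleGraph.fromEdgeSet (symmDiff G.edgeSet (F : Set (Sym2 V)))

/-- An edition set is a finite set of unordered pairs of *distinct* vertices. -/
def IsEditionSet (F : Finset (Sym2 V)) : Prop := ∀ e ∈ F, ¬ e.IsDiag

/-- `S` induces in `G` an `ℓ`-clique: a connected complete (at most) `ℓ`-partite graph,
i.e. `S` splits into at most `ℓ` independent sets with all edges present between
different parts, and the induced subgraph is connected. -/
def IsEllCliqueOn (ℓ : ℕ) (G : SimpleGraph V) (S : Set V) : Prop :=
  (G.induce S).Connected ∧
  ∃ f : V → Fin ℓ, ∀ x ∈ S, ∀ y ∈ S, x ≠ y → (G.Adj x y ↔ f x ≠ f y)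

/-- A cluster graph: every connected component is a clique. -/
def IsCluster (G : SimpleGraph V) : Prop :=
  ∀ c : G.ConnectedComponent, G.IsClique c.supp

/-- A `K_ℓ`-cluster graph: every connected component is an `ℓ`-clique. -/
def IsKlCluster (ℓ : ℕ) (G : SimpleGraph V) : Prop :=
  ∀ c : G.ConnectedComponent, IsEllCliqueOn ℓ G c.supp

/-- An `L`-cluster graph: every connected component is a clique or an `ℓ`-clique. -/
def IsLCluster (ℓ : ℕ) (G : SimpleGraph V) : Prop :=
  ∀ c : G.ConnectedComponent, G.IsClique c.supp ∨ IsEllCliqueOn ℓ G c.supp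

/-- `G` contains an induced subgraph isomorphic to `H`. -/
def Contains {W : Type*} (H : SimpleGraph W) (G : SimpleGraph V) : Prop :=
  Nonempty (H ↪g G)

/-- The paw: a triangle with a pendant vertex (the complement of `P3 ∪ K1`). -/
def paw : SimpleGraph (Fin 4) :=
  SimpleGraph.fromEdgeSet {s(0,1), s(0,2), s(1,2), s(0,3)}

/-- The complete graph on `ℓ + 2` vertices minus one edge. -/
def completeMinusEdge (ℓ : ℕ) : SimpleGraph (Fin (ℓ + 2)) where
  Adj x y := x ≠ y ∧ s(x,y) ≠ s((0 : Fin (ℓ + 2)), 1)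
  symm := ⟨by
    rintro x y ⟨h1, h2⟩
    exact ⟨h1.symm, by rwa [Sym2.eq_swap]⟩⟩
  loopless := ⟨fun x h => h.1 rfl⟩

/-- The graph `G̃` on `V × {1,…,ℓ}`: `(u,p)` is adjacent to `(v,q)` iff `p ≠ q` and
(`u = v` or `uv ∈ E(G)`). -/
def tilde (ℓ : ℕ) (G : SimpleGraph V) : SimpleGraph (V × Fin ℓ) where
  Adj a b := a.2 ≠ b.2 ∧ (a.1 = b.1 ∨ G.Adj a.1 b.1)
  symm := ⟨fun _ _ h => ⟨h.1.symm, h.2.imp Eq.symm (fun h' => h'.symm)⟩⟩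
  loopless := ⟨fun _ h => h.1 rfl⟩

/-- `x` and `y` are twins in `G`: they are distinct and every other vertex is adjacent
to `x` iff it is adjacent to `y`. -/
def IsTwinPair (G : SimpleGraph V) (x y : V) : Prop :=
  x ≠ y ∧ ∀ z, z ≠ x → z ≠ y → (G.Adj z x ↔ G.Adj z y)

/-- The twin class of a vertex. -/
def twinClass (G : SimpleGraph V) (v : V) : Set V :=
  {w | w = v ∨ IsTwinPair G v w}

/-- The set of twin classes of `G`. -/
def twinClasses (G : SimpleGraph V) : Set (Set V) :=
  Set.range (twinClass G)

/-- The number of U-vertices of `G_Q` (singleton twin classes). -/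
noncomputable def Ucount (G : SimpleGraph V) : ℕ :=
  {C ∈ twinClasses G | C.Subsingleton}.ncard

/-- The number of P-vertices of `G_Q` (twin classes of size ≥ 2 of pairwise false twins). -/
noncomputable def Pcount (G : SimpleGraph V) : ℕ :=
  {C ∈ twinClasses G | 2 ≤ C.ncard ∧ ∀ x ∈ C, ∀ y ∈ C, x ≠ y → ¬ G.Adj x y}.ncard

/-- The number of S-vertices of `G_Q` (twin classes of size ≥ 2 of pairwise true twins). -/
noncomputable def Scount (G : SimpleGraph V) : ℕ :=
  {C ∈ twinClasses G | 2 ≤ C.ncard ∧ ∀ x ∈ C, ∀ y ∈ C, x ≠ y → G.Adj x y}.ncard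

/-- The total number of twin classes of `G` (vertices of the Q-quotient graph `G_Q`). -/
noncomputable def Qcount (G : SimpleGraph V) : ℕ :=
  (twinClasses G).ncard

/-- The edition set `F̃ = { {(u,p),(v,q)} : {u,v} ∈ F, p ≠ q }` on `V × {1,…,ℓ}`. -/
def liftEdition [Fintype V] [DecidableEq V] (ℓ : ℕ) (F : Finset (Sym2 V)) :
    Finset (Sym2 (V × Fin ℓ)) :=
  Finset.univ.filter (fun e => ∃ (u v : V) (p q : Fin ℓ),
    p ≠ q ∧ s(u,v) ∈ F ∧ e = s((u,p),(v,q)))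

lemma buildP4 {G : SimpleGraph V} {a b c d : V}
    (hab : G.Adj a b) (hbc : G.Adj b c) (hcd : G.Adj c d)
    (hac : ¬ G.Adj a c) (had : ¬ G.Adj a d) (hbd : ¬ G.Adj b d)
    (nac : a ≠ c) (nad : a ≠ d) (nbd : b ≠ d) :
    Contains (SimpleGraph.pathGraph 4) G := by
  have hba := hab.symm
  have hcb := hbc.symm
  have hdc := hcd.symm
  have hca : ¬ G.Adj c a := fun h => hac h.symm
  have hda : ¬ G.Adj d a := fun h => had h.symm
  have hdb : ¬ G.Adj d b := fun h => hbd h.symm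
  have haa := G.loopless.irrefl a
  have hbb := G.loopless.irrefl b
  have hcc := G.loopless.irrefl c
  have hdd := G.loopless.irrefl d
  refine ⟨⟨⟨![a,b,c,d], ?_⟩, ?_⟩⟩
  · intro i j hij
    fin_cases i <;> fin_cases j <;>
      simp_all [hab.ne, hbc.ne, hcd.ne, hab.ne', hbc.ne', hcd.ne', nac.symm, nad.symm, nbd.symm]
  · intro i j
    change G.Adj (![a,b,c,d] i) (![a,b,c,d] j) ↔ _
    fin_cases i <;> fin_cases j <;> simp_all [pathGraph_adj] <;> decide

lemma buildPaw {G : SimpleGraph V} {a b c d : V}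
    (hab : G.Adj a b) (hac : G.Adj a c) (hbc : G.Adj b c) (had : G.Adj a d)
    (hbd : ¬ G.Adj b d) (hcd : ¬ G.Adj c d)
    (nbd : b ≠ d) (ncd : c ≠ d) :
    Contains paw G := by
  have hba := hab.symm
  have hca := hac.symm
  have hcb := hbc.symm
  have hda := had.symm
  have hdb : ¬ G.Adj d b := fun h => hbd h.symm
  have hdc : ¬ G.Adj d c := fun h => hcd h.symm
  have haa := G.loopless.irrefl a
  have hbb := G.loopless.irrefl b
  have hcc := G.loopless.irrefl c
  have hdd := G.loopless.irrefl d
  refine ⟨⟨⟨![a,b,c,d], ?_⟩, ?_⟩⟩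
  · intro i j hij
    fin_cases i <;> fin_cases j <;>
      simp_all [hab.ne, hac.ne, hbc.ne, had.ne, hab.ne', hac.ne', hbc.ne', had.ne',
        nbd.symm, ncd.symm]
  · intro i j
    change G.Adj (![a,b,c,d] i) (![a,b,c,d] j) ↔ _
    fin_cases i <;> fin_cases j <;>
      simp_all [paw, fromEdgeSet_adj, Sym2.eq, Sym2.rel_iff'] <;> decide

lemma key_aux {G : SimpleGraph V} (hP4 : ¬ Contains (SimpleGraph.pathGraph 4) G)
    (hpaw : ¬ Contains paw G) :
    ∀ {y x : V} (_ : G.Walk y x) (z : V),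
      G.Adj x z → ¬ G.Adj y x → ¬ G.Adj y z → False := by
  intro y x w
  induction w with
  | nil =>
    intro z hxz _ hyz
    exact hyz hxz
  | @cons y w x hyw p ih =>
    intro z hxz hyx hyz
    by_cases hwx : G.Adj w x
    · by_cases hwz : G.Adj w z
      · -- paw : triangle w x z with pendant y adjacent to w
        refine hpaw.elim (buildPaw hwx hwz hxz hyw.symm
          (fun h => hyx h.symm) (fun h => hyz h.symm) ?_ ?_)
        · rintro rfl; exact hyz hxz
        · rintro rfl; exact hyx hxz.symm
      · -- P4 : y w x z
        refine hP4.elim (buildP4 hyw hwx hxz hyx hyz hwz ?_ ?_ ?_)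
        · rintro rfl; exact hyz hxz
        · rintro rfl; exact hyx hxz.symm
        · rintro rfl; exact hyz hyw
    · by_cases hwz : G.Adj w z
      · -- P4 : y w z x
        refine hP4.elim (buildP4 hyw hwz hxz.symm hyz hyx hwx ?_ ?_ ?_)
        · rintro rfl; exact hyx hxz.symm
        · rintro rfl; exact hyz hxz
        · rintro rfl; exact hyx hyw
      · exact ih z hxz hwx hwz

lemma mem_supp_reach {G : SimpleGraph V} {c : G.ConnectedComponent} {x y : V}
    (hx : x ∈ c.supp) (hy : y ∈ c.supp) : G.Reachable x y := by
  rw [ConnectedComponent.mem_supp_iff] at hx hy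
  exact ConnectedComponent.exact (hx.trans hy.symm)

lemma induce_supp_reach {G : SimpleGraph V} {c : G.ConnectedComponent} :
    ∀ {x y : V} (_ : G.Walk x y) (hx : x ∈ c.supp) (hy : y ∈ c.supp),
      (G.induce c.supp).Reachable ⟨x, hx⟩ ⟨y, hy⟩ := by
  intro x y w
  induction w with
  | nil => intro hx hy; exact Reachable.refl _
  | @cons x b y hadj p ih =>
    intro hx hy
    have hb : b ∈ c.supp := by
      rw [ConnectedComponent.mem_supp_iff] at hx ⊢
      rw [← hx]
      exact (SimpleGraph.ConnectedComponent.connectedComponentMk_eq_of_adj hadj).symm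
    have ha : (G.induce c.supp).Adj ⟨x, hx⟩ ⟨b, hb⟩ := by
      simpa using hadj
    exact ha.reachable.trans (ih hb hy)

lemma connected_induce_supp {G : SimpleGraph V} (c : G.ConnectedComponent) :
    (G.induce c.supp).Connected := by
  obtain ⟨v, hv⟩ := c.exists_rep
  have hvm : v ∈ c.supp := by rwa [ConnectedComponent.mem_supp_iff]
  rw [connected_iff]
  refine ⟨?_, ⟨⟨v, hvm⟩⟩⟩
  rintro ⟨x, hx⟩ ⟨y, hy⟩
  obtain ⟨w⟩ := mem_supp_reach hx hy
  exact induce_supp_reach w hx hy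

lemma buildKe {G : SimpleGraph V} (ℓ : ℕ) {a b : V} (r : Fin ℓ → V)
    (hab : ¬ G.Adj a b) (nab : a ≠ b)
    (hra : ∀ i, G.Adj (r i) a) (hrb : ∀ i, G.Adj (r i) b)
    (hrr : ∀ i j, i ≠ j → G.Adj (r i) (r j)) :
    Contains (completeMinusEdge ℓ) G := by
  have h1 : (1 : Fin (ℓ + 2)) = Fin.succ 0 := by
    simp [Fin.ext_iff]
  have hne1 : ∀ k : Fin ℓ, (k.succ.succ : Fin (ℓ + 2)) ≠ 1 :=
    fun k h => Fin.succ_ne_zero k (Fin.succ_injective _ (h.trans h1))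
  have hne1' : ∀ k : Fin ℓ, (1 : Fin (ℓ + 2)) ≠ k.succ.succ := fun k h => hne1 k h.symm
  have hba : ¬ G.Adj b a := fun h => hab h.symm
  set vmap : Fin (ℓ + 2) → V := Fin.cons a (Fin.cons b r) with hvm
  have hrel : ∀ i j, G.Adj (vmap i) (vmap j) ↔ (completeMinusEdge ℓ).Adj i j := by
    intro i j
    induction i using Fin.cases with
    | zero =>
      induction j using Fin.cases with
      | zero => simp [completeMinusEdge, hvm]
      | succ j =>
        induction j using Fin.cases with
        | zero =>
          simp [completeMinusEdge, hvm, ← h1, hab]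
        | succ k =>
          simp [completeMinusEdge, hvm, Sym2.eq_iff, (hra k).symm,
            (Fin.succ_ne_zero _).symm, Fin.succ_ne_zero, hne1, hne1']
    | succ i =>
      induction i using Fin.cases with
      | zero =>
        induction j using Fin.cases with
        | zero => simp [completeMinusEdge, hvm, ← h1, hba]
        | succ j =>
          induction j using Fin.cases with
          | zero => simp [completeMinusEdge, hvm]
          | succ k =>
            simp [completeMinusEdge, hvm, Sym2.eq_iff, hrb k, (hrb k).symm,
              Fin.succ_ne_zero, (Fin.succ_ne_zero _).symm, hne1, hne1']
      | succ i =>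
        induction j using Fin.cases with
        | zero =>
          simp [completeMinusEdge, hvm, Sym2.eq_iff, hra i, (hra i).symm,
            Fin.succ_ne_zero, (Fin.succ_ne_zero _).symm, hne1, hne1']
        | succ j =>
          induction j using Fin.cases with
          | zero =>
            simp [completeMinusEdge, hvm, Sym2.eq_iff, hrb i, (hrb i).symm,
              Fin.succ_ne_zero, (Fin.succ_ne_zero _).symm, hne1, hne1']
          | succ k =>
            by_cases hik : i = k
            · subst hik
              simp [completeMinusEdge, hvm]
            · simp only [hvm, Fin.cons_succ]
              constructor
              · intro _
                refine ⟨?_, ?_⟩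
                · intro h
                  exact hik (Fin.succ_injective _ (Fin.succ_injective _ h))
                · simp only [ne_eq, Sym2.eq_iff]
                  rintro (⟨h, -⟩ | ⟨-, h⟩) <;> exact Fin.succ_ne_zero _ h
              · intro _
                exact hrr i k hik
  refine ⟨⟨⟨vmap, ?_⟩, fun {i j} => hrel i j⟩⟩
  intro i j h
  by_contra hne
  by_cases hK : (completeMinusEdge ℓ).Adj i j
  · have := (hrel i j).mpr hK
    rw [h] at this
    exact G.irrefl this
  · have hs : s(i, j) = s((0 : Fin (ℓ+2)), 1) := by
      by_contra hs
      exact hK ⟨hne, hs⟩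
    rw [Sym2.eq_iff] at hs
    have hv0 : vmap 0 = a := by simp [hvm]
    have hv1 : vmap 1 = b := by rw [hvm, h1, Fin.cons_succ, Fin.cons_zero]
    rcases hs with ⟨rfl, rfl⟩ | ⟨rfl, rfl⟩
    · rw [hv0, hv1] at h; exact nab h
    · rw [hv0, hv1] at h; exact nab h.symm

lemma backward [Fintype V] (ℓ : ℕ) {G : SimpleGraph V}
    (hP4 : ¬ Contains (SimpleGraph.pathGraph 4) G) (hpaw : ¬ Contains paw G)
    (hKe : ¬ Contains (completeMinusEdge ℓ) G) (c : G.ConnectedComponent) :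
    G.IsClique c.supp ∨ IsEllCliqueOn ℓ G c.supp := by
  classical
  by_cases hclique : G.IsClique c.supp
  · exact Or.inl hclique
  have kk : ∀ {x z y : V}, x ∈ c.supp → y ∈ c.supp → G.Adj x z → ¬ G.Adj y x →
      ¬ G.Adj y z → False := by
    intro x z y hx hy hxz hyx hyz
    obtain ⟨w⟩ := mem_supp_reach hy hx
    exact key_aux hP4 hpaw w z hxz hyx hyz
  set cls : V → Set V := fun v => {w | w ∈ c.supp ∧ (w = v ∨ ¬ G.Adj v w)} with hclsdef
  have hdir : ∀ x ∈ c.supp, ∀ y ∈ c.supp, ¬ G.Adj x y → cls x ⊆ cls y := by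
    intro x hx y hy hxy w hw
    obtain ⟨hwS, hw⟩ := hw
    refine ⟨hwS, ?_⟩
    by_cases hwy : w = y
    · exact Or.inl hwy
    rcases hw with rfl | hnxw
    · exact Or.inr (fun h' => hxy h'.symm)
    · exact Or.inr (fun hyw => kk hy hx hyw hxy hnxw)
  have hsame : ∀ x ∈ c.supp, ∀ y ∈ c.supp, ¬ G.Adj x y → cls x = cls y := by
    intro x hx y hy hxy
    exact subset_antisymm (hdir x hx y hy hxy) (hdir y hy x hx (fun h => hxy h.symm))
  have hAdjIff : ∀ x ∈ c.supp, ∀ y ∈ c.supp, x ≠ y → (G.Adj x y ↔ cls x ≠ cls y) := by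
    intro x hx y hy hne
    constructor
    · intro hadj heq
      have hyy : y ∈ cls y := ⟨hy, Or.inl rfl⟩
      rw [← heq] at hyy
      rcases hyy.2 with rfl | hn
      · exact hne rfl
      · exact hn hadj
    · intro hclne
      by_contra hnadj
      exact hclne (hsame x hx y hy hnadj)
  rw [isClique_iff, Set.Pairwise] at hclique
  push_neg at hclique
  obtain ⟨a, ha, b, hb, hne, hnadj⟩ := hclique
  set T : Set (Set V) := cls '' c.supp with hTdef
  have hTfin : T.Finite := (Set.toFinite _).image _
  have hmemT : ∀ v ∈ c.supp, cls v ∈ T := fun v hv => ⟨v, hv, rfl⟩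
  have hclsb : cls b = cls a := hsame b hb a ha (fun h => hnadj h.symm)
  have hTcard : T.ncard ≤ ℓ := by
    by_contra hlt
    push_neg at hlt
    set D : Set (Set V) := T \ {cls a} with hDdef
    have hDfin : D.Finite := hTfin.diff
    have hD : ℓ ≤ D.ncard := by
      have h1 : T ⊆ D ∪ {cls a} := by
        intro t ht
        by_cases h : t = cls a
        · exact Or.inr h
        · exact Or.inl ⟨ht, h⟩
      have h2 : T.ncard ≤ (D ∪ {cls a}).ncard :=
        Set.ncard_le_ncard h1 (hDfin.union (Set.finite_singleton _))
      have h3 : (D ∪ {cls a}).ncard ≤ D.ncard + 1 := by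
        refine (Set.ncard_union_le _ _).trans ?_
        simp
      omega
    haveI : Fintype ↥D := hDfin.fintype
    have hcard : Fintype.card (Fin ℓ) ≤ Fintype.card ↥D := by
      rw [Fintype.card_fin]
      calc ℓ ≤ D.ncard := hD
      _ = Nat.card ↥D := (Nat.card_coe_set_eq D).symm
      _ = Fintype.card ↥D := Nat.card_eq_fintype_card
    obtain ⟨g⟩ := Function.Embedding.nonempty_of_card_le hcard
    have hrep : ∀ i : Fin ℓ, ∃ v, v ∈ c.supp ∧ cls v = (g i : Set V) := by
      intro i
      obtain ⟨v, hv, hveq⟩ := (g i).2.1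
      exact ⟨v, hv, hveq⟩
    choose r hrS hrcls using hrep
    have hgne : ∀ i : Fin ℓ, (g i : Set V) ≠ cls a := fun i => (g i).2.2
    have hrne_a : ∀ i, cls (r i) ≠ cls a := fun i => (hrcls i) ▸ hgne i
    have hrne_b : ∀ i, cls (r i) ≠ cls b := fun i => hclsb ▸ hrne_a i
    apply hKe
    refine buildKe ℓ r hnadj hne ?_ ?_ ?_
    · intro i
      exact (hAdjIff (r i) (hrS i) a ha (fun h => hrne_a i (congrArg cls h))).mpr (hrne_a i)
    · intro i
      exact (hAdjIff (r i) (hrS i) b hb (fun h => hrne_b i (congrArg cls h))).mpr (hrne_b i)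
    · intro i j hij
      have hgij : cls (r i) ≠ cls (r j) := by
        rw [hrcls i, hrcls j]
        intro h
        exact hij (g.injective (Subtype.ext h))
      exact (hAdjIff (r i) (hrS i) (r j) (hrS j) (fun h => hgij (congrArg cls h))).mpr hgij
  haveI : Fintype ↥T := hTfin.fintype
  have hcard2 : Fintype.card ↥T ≤ Fintype.card (Fin ℓ) := by
    rw [Fintype.card_fin]
    calc Fintype.card ↥T = Nat.card ↥T := Nat.card_eq_fintype_card.symm
    _ = T.ncard := Nat.card_coe_set_eq T
    _ ≤ ℓ := hTcard
  obtain ⟨emb⟩ := Function.Embedding.nonempty_of_card_le hcard2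
  have haT : cls a ∈ T := hmemT a ha
  refine Or.inr ⟨connected_induce_supp c, fun v =>
    if h : v ∈ c.supp then emb ⟨cls v, hmemT v h⟩ else emb ⟨cls a, haT⟩, ?_⟩
  intro x hx y hy hne2
  rw [hAdjIff x hx y hy hne2]
  simp only [dif_pos hx, dif_pos hy]
  constructor
  · intro hclne hfe
    exact hclne (congrArg Subtype.val (emb.injective hfe))
  · intro hfne hcle
    exact hfne (congrArg emb (Subtype.ext hcle))


/-- Proposition 1: `G` is an `L`-cluster graph iff it contains no induced `P4`,
no induced paw, and no induced `K_{ℓ+2} - e`. -/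
theorem lCluster_iff_forbidden [Fintype V] (ℓ : ℕ) (hℓ : 2 ≤ ℓ) (G : SimpleGraph V) :
    IsLCluster ℓ G ↔
      ¬ Contains (SimpleGraph.pathGraph 4) G ∧ ¬ Contains paw G ∧
        ¬ Contains (completeMinusEdge ℓ) G := by
  constructor
  · intro hL
    refine ⟨?_, ?_, ?_⟩
    · rintro ⟨e⟩
      have adj01 : (SimpleGraph.pathGraph 4).Adj 0 1 := by rw [pathGraph_adj]; decide
      have adj12 : (SimpleGraph.pathGraph 4).Adj 1 2 := by rw [pathGraph_adj]; decide
      have adj23 : (SimpleGraph.pathGraph 4).Adj 2 3 := by rw [pathGraph_adj]; decide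
      have nadj02 : ¬ (SimpleGraph.pathGraph 4).Adj 0 2 := by rw [pathGraph_adj]; decide
      have nadj03 : ¬ (SimpleGraph.pathGraph 4).Adj 0 3 := by rw [pathGraph_adj]; decide
      have nadj13 : ¬ (SimpleGraph.pathGraph 4).Adj 1 3 := by rw [pathGraph_adj]; decide
      set c := G.connectedComponentMk (e 0) with hc
      have mem0 : e 0 ∈ c.supp := by rw [ConnectedComponent.mem_supp_iff]
      have mem1 : e 1 ∈ c.supp := by
        rw [ConnectedComponent.mem_supp_iff, hc]
        exact (ConnectedComponent.sound (e.map_adj_iff.mpr adj01).reachable).symm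
      have mem2 : e 2 ∈ c.supp := by
        rw [ConnectedComponent.mem_supp_iff, hc]
        exact (ConnectedComponent.sound ((e.map_adj_iff.mpr adj01).reachable.trans
          (e.map_adj_iff.mpr adj12).reachable)).symm
      have mem3 : e 3 ∈ c.supp := by
        rw [ConnectedComponent.mem_supp_iff, hc]
        exact (ConnectedComponent.sound (((e.map_adj_iff.mpr adj01).reachable.trans
          (e.map_adj_iff.mpr adj12).reachable).trans
          (e.map_adj_iff.mpr adj23).reachable)).symm
      have einj : ∀ {i j : Fin 4}, i ≠ j → e i ≠ e j :=
        fun h h' => h (e.injective h')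
      rcases hL c with hcl | ⟨-, f, hf⟩
      · exact (fun h => nadj02 (e.map_adj_iff.mp h))
          (hcl mem0 mem2 (einj (by decide)))
      · have h01 : f (e 0) ≠ f (e 1) :=
          (hf _ mem0 _ mem1 (einj (by decide))).mp (e.map_adj_iff.mpr adj01)
        have h02 : f (e 0) = f (e 2) := by
          by_contra h
          exact nadj02 (e.map_adj_iff.mp
            ((hf _ mem0 _ mem2 (einj (by decide))).mpr h))
        have h03 : f (e 0) = f (e 3) := by
          by_contra h
          exact nadj03 (e.map_adj_iff.mp
            ((hf _ mem0 _ mem3 (einj (by decide))).mpr h))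
        have h13 : f (e 1) = f (e 3) := by
          by_contra h
          exact nadj13 (e.map_adj_iff.mp
            ((hf _ mem1 _ mem3 (einj (by decide))).mpr h))
        exact h01 (h03.trans h13.symm)
    · rintro ⟨e⟩
      have adj01 : paw.Adj 0 1 := by simp [paw, fromEdgeSet_adj]
      have adj02 : paw.Adj 0 2 := by simp [paw, fromEdgeSet_adj]
      have adj12 : paw.Adj 1 2 := by simp [paw, fromEdgeSet_adj]
      have adj03 : paw.Adj 0 3 := by simp [paw, fromEdgeSet_adj]
      have nadj13 : ¬ paw.Adj 1 3 := by simp [paw, fromEdgeSet_adj, Sym2.eq_iff]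
      have nadj23 : ¬ paw.Adj 2 3 := by simp [paw, fromEdgeSet_adj, Sym2.eq_iff]
      set c := G.connectedComponentMk (e 0) with hc
      have mem0 : e 0 ∈ c.supp := by rw [ConnectedComponent.mem_supp_iff]
      have mem1 : e 1 ∈ c.supp := by
        rw [ConnectedComponent.mem_supp_iff, hc]
        exact (ConnectedComponent.sound (e.map_adj_iff.mpr adj01).reachable).symm
      have mem2 : e 2 ∈ c.supp := by
        rw [ConnectedComponent.mem_supp_iff, hc]
        exact (ConnectedComponent.sound (e.map_adj_iff.mpr adj02).reachable).symm
      have mem3 : e 3 ∈ c.supp := by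
        rw [ConnectedComponent.mem_supp_iff, hc]
        exact (ConnectedComponent.sound (e.map_adj_iff.mpr adj03).reachable).symm
      have einj : ∀ {i j : Fin 4}, i ≠ j → e i ≠ e j :=
        fun h h' => h (e.injective h')
      rcases hL c with hcl | ⟨-, f, hf⟩
      · exact (fun h => nadj13 (e.map_adj_iff.mp h))
          (hcl mem1 mem3 (einj (by decide)))
      · have h12 : f (e 1) ≠ f (e 2) :=
          (hf _ mem1 _ mem2 (einj (by decide))).mp (e.map_adj_iff.mpr adj12)
        have h13 : f (e 1) = f (e 3) := by
          by_contra h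
          exact nadj13 (e.map_adj_iff.mp
            ((hf _ mem1 _ mem3 (einj (by decide))).mpr h))
        have h23 : f (e 2) = f (e 3) := by
          by_contra h
          exact nadj23 (e.map_adj_iff.mp
            ((hf _ mem2 _ mem3 (einj (by decide))).mpr h))
        exact h12 (h13.trans h23.symm)
    · rintro ⟨e⟩
      have h1v : ((1 : Fin (ℓ + 2)) : ℕ) = 1 := rfl
      set x2 : Fin (ℓ + 2) := ⟨2, by omega⟩ with hx2
      have nadj01 : ¬ (completeMinusEdge ℓ).Adj 0 1 := fun h => h.2 rfl
      have adj02 : (completeMinusEdge ℓ).Adj 0 x2 := by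
        constructor
        · simp [Fin.ext_iff, hx2]
        · simp only [ne_eq, Sym2.eq_iff]
          push_neg
          constructor
          · intro _; simp [Fin.ext_iff, hx2]
          · intro h; exact absurd h (by simp [Fin.ext_iff])
      have adj21 : (completeMinusEdge ℓ).Adj x2 1 := by
        constructor
        · simp [Fin.ext_iff, hx2]
        · simp only [ne_eq, Sym2.eq_iff]
          push_neg
          constructor
          · intro h; exact absurd h (by simp [Fin.ext_iff, hx2])
          · intro h; exact absurd h (by simp [Fin.ext_iff, hx2])
      have adjsucc : ∀ i j : Fin (ℓ + 1), i ≠ j →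
          (completeMinusEdge ℓ).Adj i.succ j.succ := by
        intro i j hij
        constructor
        · exact fun h => hij (Fin.succ_injective _ h)
        · simp only [ne_eq, Sym2.eq_iff]
          rintro (⟨h, -⟩ | ⟨-, h⟩) <;> exact Fin.succ_ne_zero _ h
      have adj0succ : ∀ i : Fin (ℓ + 1), i ≠ 0 →
          (completeMinusEdge ℓ).Adj 0 i.succ := by
        intro i hi
        constructor
        · exact fun h => Fin.succ_ne_zero _ h.symm
        · simp only [ne_eq, Sym2.eq_iff]
          rintro (⟨-, h⟩ | ⟨h, -⟩)
          · refine hi (Fin.succ_injective _ ?_)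
            rw [h, Fin.succ_zero_eq_one']
          · exact absurd h (by simp [Fin.ext_iff])
      set c := G.connectedComponentMk (e 0) with hc
      have mem : ∀ i : Fin (ℓ + 2), e i ∈ c.supp := by
        intro i
        rw [ConnectedComponent.mem_supp_iff, hc]
        refine (ConnectedComponent.sound ?_).symm
        by_cases h0 : i = 0
        · rw [h0]
        by_cases h1 : i = 1
        · rw [h1]
          exact (e.map_adj_iff.mpr adj02).reachable.trans
            (e.map_adj_iff.mpr adj21).reachable
        · obtain ⟨j, rfl⟩ := Fin.exists_succ_eq.mpr h0
          refine (e.map_adj_iff.mpr (adj0succ j ?_)).reachable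
          intro h
          exact h1 (by rw [h, Fin.succ_zero_eq_one'])
      have einj : ∀ {i j : Fin (ℓ + 2)}, i ≠ j → e i ≠ e j :=
        fun h h' => h (e.injective h')
      rcases hL c with hcl | ⟨-, f, hf⟩
      · refine (fun h => nadj01 (e.map_adj_iff.mp h))
          (hcl (mem 0) (mem 1) (einj ?_))
        simp [Fin.ext_iff]
      · have hg : Function.Injective (fun i : Fin (ℓ + 1) => f (e i.succ)) := by
          intro i j h
          by_contra hij
          exact (hf _ (mem i.succ) _ (mem j.succ)
            (einj (fun h' => hij (Fin.succ_injective _ h')))).mp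
            (e.map_adj_iff.mpr (adjsucc i j hij)) h
        have := Fintype.card_le_of_injective _ hg
        simp only [Fintype.card_fin] at this
        omega
  · rintro ⟨hP4, hpaw, hKe⟩ c
    exact backward ℓ hP4 hpaw hKe c
end

section
/- Every connected finite simple graph that contains no induced P4 (chordless path on 4 vertices) and no induced paw (the complement of P3 ∪ K1, i.e., a triangle with one pendant vertex attached) is a complete multipartite graph: its vertex set can be partitioned into nonempty independent sets I_1, …, I_q such that every vertex of I_i is adjacent to every vertex of I_j whenever i ≠ j. -/
open SimpleGraph

variable {V : Type*}

private lemma p4_embed' (G : SimpleGraph V) (a b c d : V) (hab : G.Adj a b) (hbc : G.Adj b c)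
    (hcd : G.Adj c d) (hac : ¬G.Adj a c) (had : ¬G.Adj a d) (hbd : ¬G.Adj b d) :
    Contains (SimpleGraph.pathGraph 4) G := by
  have hanb := hab.ne
  have hbnc := hbc.ne
  have hcnd := hcd.ne
  have hanc : a ≠ c := fun h => had (h ▸ hcd)
  have hand : a ≠ d := fun h => hbd (h ▸ hab.symm)
  have hbnd : b ≠ d := fun h => had (h ▸ hab)
  refine ⟨⟨⟨![a,b,c,d], ?_⟩, ?_⟩⟩
  · intro i j
    fin_cases i <;> fin_cases j <;> simp_all <;> (intro h; simp_all)
  · intro i j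
    show G.Adj (![a,b,c,d] i) (![a,b,c,d] j) ↔ _
    fin_cases i <;> fin_cases j <;>
      simp_all [SimpleGraph.pathGraph_adj, G.adj_comm] <;> omega

private lemma paw_adj' (i j : Fin 4) : paw.Adj i j ↔
    (s(i,j) ∈ ({s(0,1), s(0,2), s(1,2), s(0,3)} : Set (Sym2 (Fin 4))) ∧ i ≠ j) := by
  simp [paw, SimpleGraph.fromEdgeSet_adj]

private lemma paw_embed' (G : SimpleGraph V) (a b c d : V) (hab : G.Adj a b) (hac : G.Adj a c)
    (hbc : G.Adj b c) (had : G.Adj a d) (hbd : ¬G.Adj b d) (hcd : ¬G.Adj c d) :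
    Contains paw G := by
  have hanb := hab.ne
  have hanc := hac.ne
  have hand := had.ne
  have hbnc := hbc.ne
  have hbnd : b ≠ d := fun h => hcd (h ▸ hbc.symm)
  have hcnd : c ≠ d := fun h => hbd (h ▸ hbc)
  refine ⟨⟨⟨![a,b,c,d], ?_⟩, ?_⟩⟩
  · intro i j
    fin_cases i <;> fin_cases j <;> simp_all <;> (intro h; simp_all)
  · intro i j
    show G.Adj (![a,b,c,d] i) (![a,b,c,d] j) ↔ _
    fin_cases i <;> fin_cases j <;>
      simp_all [paw_adj', Sym2.eq, Sym2.rel_iff', Prod.ext_iff, G.adj_comm]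

private lemma key_lemma (G : SimpleGraph V)
    (hP4 : ¬ Contains (SimpleGraph.pathGraph 4) G) (hpaw : ¬ Contains paw G)
    {z : V} :
    ∀ {y x : V} (_ : G.Walk y x), G.Adj x z → ¬G.Adj y x → ¬G.Adj y z → y ≠ x → y ≠ z →
      False := by
  intro y x w
  induction w with
  | nil => intro _ _ _ hne _; exact hne rfl
  | @cons y v x hadj p ih =>
    intro hxz hyx hyz _ _
    have hvnex : v ≠ x := fun h => hyx (h ▸ hadj)
    have hvnez : v ≠ z := fun h => hyz (h ▸ hadj)
    by_cases hvx : G.Adj v x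
    · by_cases hvz : G.Adj v z
      · -- paw on v,x,z,y : triangle v x z, pendant y ~ v
        exact hpaw (paw_embed' G v x z y hvx hvz hxz hadj.symm
          (fun h => hyx h.symm) (fun h => hyz h.symm))
      · -- P4 : z - x - v - y
        exact hP4 (p4_embed' G z x v y hxz.symm hvx.symm hadj.symm
          (fun h => hvz h.symm) (fun h => hyz h.symm) (fun h => hyx h.symm))
    · by_cases hvz : G.Adj v z
      · -- P4 : y - v - z - x
        exact hP4 (p4_embed' G y v z x hadj hvz hxz.symm hyz hyx hvx)
      · exact ih hxz hvx hvz hvnex hvnez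

/-- Every connected graph with no induced `P4` and no induced paw is complete
multipartite: its vertex set partitions into nonempty independent sets with all
edges between different parts. -/
theorem connected_p4_paw_free_is_complete_multipartite [Fintype V] (G : SimpleGraph V)
    (hconn : G.Connected)
    (hP4 : ¬ Contains (SimpleGraph.pathGraph 4) G)
    (hpaw : ¬ Contains paw G) :
    ∃ (q : ℕ) (f : V → Fin q), Function.Surjective f ∧
      ∀ x y : V, x ≠ y → (G.Adj x y ↔ f x ≠ f y) := by
  classical
  have key : ∀ {x z y : V}, G.Adj x z → ¬G.Adj y x → ¬G.Adj y z → y ≠ x → y ≠ z → False := by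
    intro x z y hxz hyx hyz hnx hnz
    exact key_lemma G hP4 hpaw (hconn.preconnected y x).some hxz hyx hyz hnx hnz
  let s : Setoid V := ⟨fun x y => x = y ∨ ¬G.Adj x y, by
    refine ⟨fun x => Or.inl rfl, ?_, ?_⟩
    · intro x y h
      rcases h with h | h
      · exact Or.inl h.symm
      · exact Or.inr (fun h' => h h'.symm)
    · intro x y z hxy hyz
      rcases hxy with rfl | hxy
      · exact hyz
      rcases hyz with rfl | hyz
      · exact Or.inr hxy
      by_cases hxz : x = z
      · exact Or.inl hxz
      refine Or.inr (fun hadj => ?_)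
      have hynx : y ≠ x := fun h => hyz (by rw [h]; exact hadj)
      have hynz : y ≠ z := fun h => hxy (by rw [h]; exact hadj)
      exact key hadj (fun h => hxy h.symm) hyz hynx hynz⟩
  have hFin : Fintype (Quotient s) := Fintype.ofSurjective (Quotient.mk s)
    (Quotient.mk''_surjective)
  let e := Fintype.equivFin (Quotient s)
  refine ⟨Fintype.card (Quotient s), fun v => e (Quotient.mk s v), ?_, ?_⟩
  · intro i
    obtain ⟨q, hq⟩ := e.surjective i
    obtain ⟨v, rfl⟩ := Quotient.exists_rep q
    exact ⟨v, hq⟩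
  · intro x y hne
    constructor
    · intro hadj hfeq
      have hq : Quotient.mk s x = Quotient.mk s y := e.injective hfeq
      rcases Quotient.eq.mp hq with h | h
      · exact hne h
      · exact h hadj
    · intro hfne
      by_contra hadj
      exact hfne (congrArg e (Quotient.sound (Or.inr hadj)))
end

section
/- Let ℓ ≥ 2 and let G be a finite simple graph. Then G is a K_ℓ-cluster graph if and only if G contains no induced subgraph isomorphic to P4 (the chordless path on 4 vertices), to the paw (the complement of P3 ∪ K1, i.e., a triangle with one pendant vertex attached), or to K_{ℓ+1} (the complete graph on ℓ+1 vertices). -/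
open SimpleGraph

variable {V : Type*}

section AuxKlCluster
variable {G : SimpleGraph V}

private lemma aux_reach_in_supp {c : G.ConnectedComponent} :
    ∀ {a b : V} (_ : G.Walk a b) (ha : a ∈ c.supp) (hb : b ∈ c.supp),
      (G.induce c.supp).Reachable ⟨a, ha⟩ ⟨b, hb⟩ := by
  intro a b w
  induction w with
  | nil => intro ha hb; rfl
  | @cons a x b h p ih =>
    intro ha hb
    have hx : x ∈ c.supp := by
      rw [ConnectedComponent.mem_supp_iff] at ha ⊢
      rw [← ha]; exact ConnectedComponent.sound h.symm.reachable
    have hadj : (G.induce c.supp).Adj ⟨a, ha⟩ ⟨x, hx⟩ := by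
      simp [comap_adj, h]
    exact hadj.reachable.trans (ih hx hb)

private lemma aux_induce_supp_connected (c : G.ConnectedComponent) :
    (G.induce c.supp).Connected := by
  obtain ⟨v, hv⟩ := c.exists_rep
  haveI : Nonempty ↥c.supp := ⟨⟨v, hv⟩⟩
  refine ⟨fun a b => ?_⟩
  obtain ⟨a, ha⟩ := a; obtain ⟨b, hb⟩ := b
  have hr : G.Reachable a b := by
    rw [ConnectedComponent.mem_supp_iff] at ha hb
    exact ConnectedComponent.exact (ha.trans hb.symm)
  exact aux_reach_in_supp hr.some ha hb

private lemma aux_contains_path4 {a b c d : V} (hab : G.Adj a b) (hbc : G.Adj b c)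
    (hcd : G.Adj c d) (hac : ¬ G.Adj a c) (had : ¬ G.Adj a d) (hbd : ¬ G.Adj b d)
    (hac' : a ≠ c) (had' : a ≠ d) (hbd' : b ≠ d) :
    Contains (SimpleGraph.pathGraph 4) G := by
  have hba := hab.symm; have hcb := hbc.symm; have hdc := hcd.symm
  have hca : ¬ G.Adj c a := fun h => hac h.symm
  have hda : ¬ G.Adj d a := fun h => had h.symm
  have hdb : ¬ G.Adj d b := fun h => hbd h.symm
  have h1 := hab.ne; have h2 := hbc.ne; have h3 := hcd.ne
  have h1' := hab.ne'; have h2' := hbc.ne'; have h3' := hcd.ne'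
  have hca' := hac'.symm; have hda' := had'.symm; have hdb' := hbd'.symm
  have ia : ¬ G.Adj a a := G.irrefl; have ib : ¬ G.Adj b b := G.irrefl
  have ic : ¬ G.Adj c c := G.irrefl; have idd : ¬ G.Adj d d := G.irrefl
  refine ⟨⟨⟨![a,b,c,d], ?_⟩, ?_⟩⟩
  · intro i j hij
    fin_cases i <;> fin_cases j <;> simp_all
  · intro i j
    change G.Adj (![a,b,c,d] i) (![a,b,c,d] j) ↔ _
    fin_cases i <;> fin_cases j <;>
      simp_all (config := { decide := true }) [pathGraph_adj, Function.Embedding.coeFn_mk]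

private lemma aux_contains_paw {a b c d : V} (hab : G.Adj a b) (hac : G.Adj a c)
    (hbc : G.Adj b c) (had : G.Adj a d) (hbd : ¬ G.Adj b d) (hcd : ¬ G.Adj c d)
    (hbd' : b ≠ d) (hcd' : c ≠ d) :
    Contains paw G := by
  have hba := hab.symm; have hca := hac.symm; have hcb := hbc.symm
  have hda := had.symm
  have hdb : ¬ G.Adj d b := fun h => hbd h.symm
  have hdc : ¬ G.Adj d c := fun h => hcd h.symm
  have h1 := hab.ne; have h2 := hac.ne; have h3 := hbc.ne; have h4 := had.ne
  have h1' := hab.ne'; have h2' := hac.ne'; have h3' := hbc.ne'; have h4' := had.ne'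
  have hdb' := hbd'.symm; have hdc' := hcd'.symm
  have ia : ¬ G.Adj a a := G.irrefl; have ib : ¬ G.Adj b b := G.irrefl
  have ic : ¬ G.Adj c c := G.irrefl; have idd : ¬ G.Adj d d := G.irrefl
  refine ⟨⟨⟨![a,b,c,d], ?_⟩, ?_⟩⟩
  · intro i j hij
    fin_cases i <;> fin_cases j <;> simp_all
  · intro i j
    change G.Adj (![a,b,c,d] i) (![a,b,c,d] j) ↔ _
    fin_cases i <;> fin_cases j <;>
      simp_all (config := { decide := true }) [paw, fromEdgeSet_adj, Function.Embedding.coeFn_mk]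

private lemma aux_contains_complete {n : ℕ} (f : Fin n → V) (hinj : Function.Injective f)
    (hadj : ∀ i j, i ≠ j → G.Adj (f i) (f j)) :
    Contains (completeGraph (Fin n)) G := by
  refine ⟨⟨⟨f, hinj⟩, ?_⟩⟩
  intro i j
  simp only [Function.Embedding.coeFn_mk, completeGraph, top_adj]
  constructor
  · intro h hij; exact G.irrefl (hij ▸ h)
  · exact hadj i j

private lemma aux_common_neighbor (hP4 : ¬ Contains (SimpleGraph.pathGraph 4) G)
    {a b : V} (h : G.Reachable a b) (hne : a ≠ b) (hnadj : ¬ G.Adj a b) :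
    ∃ v, G.Adj a v ∧ G.Adj v b := by
  obtain ⟨w⟩ := h
  induction w with
  | nil => exact absurd rfl hne
  | @cons a x b h p ih =>
    by_cases hxb : x = b
    · exact absurd (hxb ▸ h) hnadj
    by_cases haxb : G.Adj x b
    · exact ⟨x, h, haxb⟩
    obtain ⟨v, hv1, hv2⟩ := ih hxb haxb
    by_cases hav : G.Adj a v
    · exact ⟨v, hav, hv2⟩
    · exfalso
      have havne : a ≠ v := fun he => hnadj (he ▸ hv2)
      exact hP4 (aux_contains_path4 h hv1 hv2 hav hnadj haxb havne hne hxb)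

end AuxKlCluster

/-- `G` is a `K_ℓ`-cluster graph iff it contains no induced `P4`, no induced paw,
and no induced `K_{ℓ+1}`. -/

theorem klCluster_iff_forbidden [Fintype V] (ℓ : ℕ) (hℓ : 2 ≤ ℓ) (G : SimpleGraph V) :
    IsKlCluster ℓ G ↔
      ¬ Contains (SimpleGraph.pathGraph 4) G ∧ ¬ Contains paw G ∧
        ¬ Contains (completeGraph (Fin (ℓ + 1))) G := by
  classical
  constructor
  · intro hK
    refine ⟨?_, ?_, ?_⟩
    · rintro ⟨φ⟩
      have hadj : ∀ i j : Fin 4, (pathGraph 4).Adj i j → G.Adj (φ i) (φ j) :=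
        fun i j h => φ.map_rel_iff.mpr h
      have h01 : G.Adj (φ 0) (φ 1) := hadj 0 1 (by rw [pathGraph_adj]; decide)
      have h12 : G.Adj (φ 1) (φ 2) := hadj 1 2 (by rw [pathGraph_adj]; decide)
      have h23 : G.Adj (φ 2) (φ 3) := hadj 2 3 (by rw [pathGraph_adj]; decide)
      have hn : ∀ i j : Fin 4, ¬ (pathGraph 4).Adj i j → ¬ G.Adj (φ i) (φ j) :=
        fun i j h h' => h (φ.map_rel_iff.mp h')
      have n03 : ¬ G.Adj (φ 0) (φ 3) := hn 0 3 (by rw [pathGraph_adj]; decide)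
      have n13 : ¬ G.Adj (φ 1) (φ 3) := hn 1 3 (by rw [pathGraph_adj]; decide)
      set c := G.connectedComponentMk (φ 0) with hc
      have m0 : φ 0 ∈ c.supp := rfl
      have m1 : φ 1 ∈ c.supp := ConnectedComponent.sound h01.symm.reachable
      have m2 : φ 2 ∈ c.supp :=
        ConnectedComponent.sound ((h12.symm.reachable).trans h01.symm.reachable)
      have m3 : φ 3 ∈ c.supp :=
        ConnectedComponent.sound
          ((h23.symm.reachable).trans ((h12.symm.reachable).trans h01.symm.reachable))
      obtain ⟨-, f, hf⟩ := hK c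
      have d03 : φ 0 ≠ φ 3 := fun he => absurd (φ.injective he) (by decide)
      have d13 : φ 1 ≠ φ 3 := fun he => absurd (φ.injective he) (by decide)
      have e01 : f (φ 0) ≠ f (φ 1) := (hf _ m0 _ m1 h01.ne).mp h01
      have q03 : f (φ 0) = f (φ 3) := by
        by_contra hq; exact n03 ((hf _ m0 _ m3 d03).mpr hq)
      have q13 : f (φ 1) = f (φ 3) := by
        by_contra hq; exact n13 ((hf _ m1 _ m3 d13).mpr hq)
      exact e01 (q03.trans q13.symm)
    · rintro ⟨φ⟩
      have hadj : ∀ i j : Fin 4, paw.Adj i j → G.Adj (φ i) (φ j) :=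
        fun i j h => φ.map_rel_iff.mpr h
      have hn : ∀ i j : Fin 4, ¬ paw.Adj i j → ¬ G.Adj (φ i) (φ j) :=
        fun i j h h' => h (φ.map_rel_iff.mp h')
      have pawadj : ∀ i j : Fin 4, paw.Adj i j ↔
          (s(i,j) ∈ ({s(0,1), s(0,2), s(1,2), s(0,3)} : Set (Sym2 (Fin 4))) ∧ i ≠ j) := by
        intro i j; unfold paw; exact fromEdgeSet_adj _
      have h01 : G.Adj (φ 0) (φ 1) := hadj 0 1 (by rw [pawadj]; simp)
      have h02 : G.Adj (φ 0) (φ 2) := hadj 0 2 (by rw [pawadj]; simp)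
      have h12 : G.Adj (φ 1) (φ 2) := hadj 1 2 (by rw [pawadj]; simp)
      have h03 : G.Adj (φ 0) (φ 3) := hadj 0 3 (by rw [pawadj]; simp)
      have n13 : ¬ G.Adj (φ 1) (φ 3) := hn 1 3 (by rw [pawadj]; simp [Sym2.eq, Sym2.rel_iff'])
      have n23 : ¬ G.Adj (φ 2) (φ 3) := hn 2 3 (by rw [pawadj]; simp [Sym2.eq, Sym2.rel_iff'])
      set c := G.connectedComponentMk (φ 0) with hc
      have m0 : φ 0 ∈ c.supp := rfl
      have m1 : φ 1 ∈ c.supp := ConnectedComponent.sound h01.symm.reachable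
      have m2 : φ 2 ∈ c.supp := ConnectedComponent.sound h02.symm.reachable
      have m3 : φ 3 ∈ c.supp := ConnectedComponent.sound h03.symm.reachable
      obtain ⟨-, f, hf⟩ := hK c
      have d13 : φ 1 ≠ φ 3 := fun he => absurd (φ.injective he) (by decide)
      have d23 : φ 2 ≠ φ 3 := fun he => absurd (φ.injective he) (by decide)
      have e12 : f (φ 1) ≠ f (φ 2) := (hf _ m1 _ m2 h12.ne).mp h12
      have q13 : f (φ 1) = f (φ 3) := by
        by_contra hq; exact n13 ((hf _ m1 _ m3 d13).mpr hq)
      have q23 : f (φ 2) = f (φ 3) := by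
        by_contra hq; exact n23 ((hf _ m2 _ m3 d23).mpr hq)
      exact e12 (q13.trans q23.symm)
    · rintro ⟨φ⟩
      have hadj : ∀ i j : Fin (ℓ+1), i ≠ j → G.Adj (φ i) (φ j) := fun i j h =>
        φ.map_rel_iff.mpr h
      set c := G.connectedComponentMk (φ 0) with hc
      have m : ∀ i, φ i ∈ c.supp := by
        intro i
        by_cases hi : i = 0
        · subst hi; rfl
        · exact ConnectedComponent.sound ((hadj i 0 hi).reachable)
      obtain ⟨-, f, hf⟩ := hK c
      have hinj : Function.Injective (fun i => f (φ i)) := by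
        intro i j hij
        by_contra hne
        exact (hf _ (m i) _ (m j) (φ.injective.ne hne)).mp (hadj i j hne) hij
      have hcard := Fintype.card_le_of_injective _ hinj
      simp only [Fintype.card_fin] at hcard
      omega
  · rintro ⟨h1, h2, h3⟩ c
    refine ⟨aux_induce_supp_connected c, ?_⟩
    have hreach : ∀ x y : ↥c.supp, G.Reachable x.val y.val := by
      rintro ⟨x, hx⟩ ⟨y, hy⟩
      rw [ConnectedComponent.mem_supp_iff] at hx hy
      exact ConnectedComponent.exact (hx.trans hy.symm)
    have htrans : ∀ x y z : ↥c.supp,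
        ¬ G.Adj x.val y.val → ¬ G.Adj y.val z.val → ¬ G.Adj x.val z.val := by
      rintro x y z hxy hyz hxz
      by_cases hxy' : x.val = y.val
      · exact hyz (hxy' ▸ hxz)
      by_cases hyz' : y.val = z.val
      · exact hxy (hyz' ▸ hxz)
      obtain ⟨v, hv1, hv2⟩ := aux_common_neighbor h1 (hreach y x)
        (fun h => hxy' h.symm) (fun h => hxy h.symm)
      by_cases hvz : G.Adj v z.val
      · exact h2 (aux_contains_paw hv2 hvz hxz hv1.symm hxy
          (fun h => hyz h.symm) hxy' (fun h => hyz' h.symm))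
      · exact h1 (aux_contains_path4 hv1 hv2 hxz (fun h => hxy h.symm) hyz hvz
          (fun h => hxy' h.symm) hyz' (fun he => hyz (he ▸ hv1)))
    letI st : Setoid ↥c.supp :=
      ⟨fun x y => ¬ G.Adj x.val y.val,
        ⟨fun x => G.irrefl, fun {x y} h h' => h h'.symm, fun {x y z} => htrans x y z⟩⟩
    haveI : Finite ↥c.supp := Subtype.finite
    haveI : Fintype (Quotient st) := Fintype.ofFinite _
    have hcard : Fintype.card (Quotient st) ≤ ℓ := by
      by_contra hlt
      push_neg at hlt
      have hle : Fintype.card (Fin (ℓ+1)) ≤ Fintype.card (Quotient st) := by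
        simpa using hlt
      obtain ⟨e⟩ := Function.Embedding.nonempty_of_card_le hle
      refine h3 (aux_contains_complete (fun i => ((e i).out : V)) ?_ ?_)
      · intro i j hij
        exact e.injective (Quotient.out_injective (Subtype.ext hij))
      · intro i j hij
        by_contra hnadj
        exact hij (e.injective (Quotient.out_equiv_out.mp hnadj))
    have hle : Fintype.card (Quotient st) ≤ Fintype.card (Fin ℓ) := by
      simpa using hcard
    obtain ⟨g⟩ := Function.Embedding.nonempty_of_card_le hle
    refine ⟨fun v => if h : v ∈ c.supp then g ⟦(⟨v, h⟩ : ↥c.supp)⟧ else ⟨0, by omega⟩, ?_⟩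
    intro x hx y hy hxy
    simp only [dif_pos hx, dif_pos hy]
    constructor
    · intro hGadj hfeq
      have hq : (⟦(⟨x, hx⟩ : ↥c.supp)⟧ : Quotient st) = ⟦⟨y, hy⟩⟧ := g.injective hfeq
      exact Quotient.exact hq hGadj
    · intro hne
      by_contra hnadj
      exact hne (congrArg g (Quotient.sound hnadj))
end

section
/- Let G be a finite simple graph, 𝓕 a family of graphs, and F an edition set of minimum size among all edition sets F' for which G+F' contains no induced subgraph isomorphic to a member of 𝓕. Write |F| = j. Then the pairs of F can be ordered a_1b_1, …, a_jb_j so that, setting F_0 = ∅ and F_i = {a_1b_1, …, a_ib_i} for i ≥ 1, for every i ∈ {0, …, j−1} the pair a_{i+1}b_{i+1} destroys an induced subgraph of G+F_i isomorphic to a member of 𝓕. -/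
open SimpleGraph

variable {V : Type*}

/-- Lemma 2: a minimum edition set `F` (with respect to destroying all induced copies of
members of the family `ℱ`) of size `j` can be ordered `a₁b₁, …, a_jb_j` so that the
`(i+1)`-st edition destroys an induced copy of a member of `ℱ` in `G + F_i`. -/
theorem minimum_edition_set_ordering [Fintype V] [DecidableEq V] (G : SimpleGraph V)
    {ι : Type*} {W : ι → Type*} (ℱ : ∀ i, SimpleGraph (W i))
    (F : Finset (Sym2 V)) (hF : IsEditionSet F)
    (hsol : ∀ i, ¬ Contains (ℱ i) (editGraph G F))
    (hmin : ∀ F' : Finset (Sym2 V), IsEditionSet F' →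
      (∀ i, ¬ Contains (ℱ i) (editGraph G F')) → F.card ≤ F'.card)
    (j : ℕ) (hj : F.card = j) :
    ∃ f : Fin j → Sym2 V, Function.Injective f ∧ (∀ e, e ∈ F ↔ ∃ i, f i = e) ∧
      ∀ i : Fin j, ∃ (κ : ι)
        (emb : (ℱ κ) ↪g editGraph G ((Finset.univ.filter (fun t : Fin j => t < i)).image f)),
        ∃ a b : V, a ∈ Set.range ⇑emb ∧ b ∈ Set.range ⇑emb ∧ f i = s(a,b) := by
  classical
  subst hj
  by_cases h0 : F.card = 0
  · refine ⟨fun i => (Fin.cast h0 i).elim0, fun a => (Fin.cast h0 a).elim0, ?_, ?_⟩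
    · intro e
      have : F = ∅ := Finset.card_eq_zero.mp h0
      subst this
      simp only [Finset.notMem_empty, false_iff]
      rintro ⟨i, -⟩
      exact (Fin.cast h0 i).elim0
    · intro i; exact (Fin.cast h0 i).elim0
  obtain ⟨e0, he0⟩ : F.Nonempty := Finset.card_pos.mp (Nat.pos_of_ne_zero h0)
  -- Key lemma: any proper subset of F admits a destroying edition from F \ S
  have key : ∀ S : Finset (Sym2 V), ∃ e : Sym2 V, S ⊆ F → S ≠ F →
      e ∈ F ∧ e ∉ S ∧ ∃ (κ : ι) (emb : (ℱ κ) ↪g editGraph G S),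
        ∃ a b : V, a ∈ Set.range ⇑emb ∧ b ∈ Set.range ⇑emb ∧ e = s(a,b) := by
    intro S
    by_cases hc : S ⊆ F ∧ S ≠ F
    · obtain ⟨hS, hne⟩ := hc
      have hScard : S.card < F.card :=
        Finset.card_lt_card (Finset.ssubset_iff_subset_ne.mpr ⟨hS, hne⟩)
      have hex : ∃ κ, Contains (ℱ κ) (editGraph G S) := by
        by_contra h
        push_neg at h
        have := hmin S (fun e he => hF e (hS he)) h
        omega
      obtain ⟨κ, ⟨emb⟩⟩ := hex
      by_cases hdes : ∃ e, e ∈ F ∧ e ∉ S ∧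
          ∃ a b : V, a ∈ Set.range ⇑emb ∧ b ∈ Set.range ⇑emb ∧ e = s(a,b)
      · obtain ⟨e, he⟩ := hdes
        exact ⟨e, fun _ _ => ⟨he.1, he.2.1, κ, emb, he.2.2⟩⟩
      · exfalso
        push_neg at hdes
        apply hsol κ
        refine ⟨⟨emb.toEmbedding, ?_⟩⟩
        intro x y
        show (editGraph G F).Adj (emb x) (emb y) ↔ (ℱ κ).Adj x y
        have hmem : (s(emb x, emb y) ∈ F) ↔ (s(emb x, emb y) ∈ S) := by
          constructor
          · intro h
            by_contra hn
            exact hdes _ h hn (emb x) (emb y) ⟨x, rfl⟩ ⟨y, rfl⟩ rfl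
          · exact fun h => hS h
        rw [← emb.map_adj_iff]
        simp only [editGraph, SimpleGraph.fromEdgeSet_adj, Set.mem_symmDiff,
          Finset.mem_coe]
        tauto
    · exact ⟨e0, fun h1 h2 => absurd ⟨h1, h2⟩ hc⟩
  choose step hstep using key
  set P : ℕ → Finset (Sym2 V) := fun n => Nat.rec ∅ (fun _ S => insert (step S) S) n
    with hPdef
  have hP0 : P 0 = ∅ := rfl
  have hPsucc : ∀ n, P (n + 1) = insert (step (P n)) (P n) := fun _ => rfl
  -- invariant
  have hinv : ∀ n, n ≤ F.card → P n ⊆ F ∧ (P n).card = n := by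
    intro n
    induction n with
    | zero => intro _; rw [hP0]; exact ⟨Finset.empty_subset _, Finset.card_empty⟩
    | succ n ih =>
      intro hn
      have h := ih (by omega)
      have hne : P n ≠ F := by
        intro he; rw [he] at h; omega
      obtain ⟨hmem, hnot, -⟩ := hstep (P n) h.1 hne
      rw [hPsucc]
      exact ⟨Finset.insert_subset hmem h.1,
        by rw [Finset.card_insert_of_notMem hnot, h.2]⟩
  have hmono : ∀ m n : ℕ, m ≤ n → P m ⊆ P n := by
    intro m n h
    induction n, h using Nat.le_induction with
    | base => exact subset_rfl
    | succ n hmn ih =>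
      refine ih.trans ?_
      rw [hPsucc]
      exact Finset.subset_insert _ _
  have hPim : ∀ n, P n = (Finset.range n).image (fun m => step (P m)) := by
    intro n
    induction n with
    | zero => simp [hP0]
    | succ n ih =>
      rw [hPsucc, ih, Finset.range_add_one, Finset.image_insert, ← ih]
  have hPF : P F.card = F :=
    Finset.eq_of_subset_of_card_le (hinv F.card le_rfl).1
      (by rw [(hinv F.card le_rfl).2])
  have hne' : ∀ n, n < F.card → P n ≠ F := by
    intro n hn he
    have := (hinv n (le_of_lt hn)).2
    rw [he] at this; omega
  have hnotmem : ∀ n, n < F.card → step (P n) ∉ P n := fun n hn =>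
    (hstep (P n) (hinv n (le_of_lt hn)).1 (hne' n hn)).2.1
  have hmemnext : ∀ n, step (P n) ∈ P (n + 1) := by
    intro n; rw [hPsucc]; exact Finset.mem_insert_self _ _
  refine ⟨fun i => step (P i.val), ?_, ?_, ?_⟩
  · -- injectivity
    intro a b hab
    replace hab : step (P a.val) = step (P b.val) := hab
    by_contra hne
    rcases lt_or_gt_of_ne (fun h : a = b => hne h) with h | h
    · have h1 : step (P a.val) ∈ P b.val :=
        hmono (a.val + 1) b.val h (hmemnext a.val)
      rw [hab] at h1
      exact hnotmem b.val b.isLt h1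
    · have h1 : step (P b.val) ∈ P a.val :=
        hmono (b.val + 1) a.val h (hmemnext b.val)
      rw [← hab] at h1
      exact hnotmem a.val a.isLt h1
  · -- enumeration of F
    intro e
    have henum : e ∈ F ↔ ∃ m, m < F.card ∧ step (P m) = e := by
      conv_lhs => rw [← hPF, hPim]
      simp only [Finset.mem_image, Finset.mem_range]
    rw [henum]
    constructor
    · rintro ⟨m, hm, he⟩; exact ⟨⟨m, hm⟩, he⟩
    · rintro ⟨i, he⟩; exact ⟨i.val, i.isLt, he⟩
  · -- each edition destroys a copy
    intro i
    have hset : (Finset.univ.filter (fun t : Fin F.card => t < i)).image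
        (fun t : Fin F.card => step (P t.val)) = P i.val := by
      have h1 : (Finset.univ.filter (fun t : Fin F.card => t < i)).image
          (fun t : Fin F.card => step (P t.val))
          = (Finset.range i.val).image (fun m => step (P m)) := by
        ext e
        simp only [Finset.mem_image, Finset.mem_filter, Finset.mem_univ, true_and,
          Finset.mem_range]
        constructor
        · rintro ⟨t, ht, rfl⟩; exact ⟨t.val, ht, rfl⟩
        · rintro ⟨m, hm, rfl⟩; exact ⟨⟨m, hm.trans i.isLt⟩, hm, rfl⟩
      rw [h1, ← hPim]
    rw [hset]
    obtain ⟨-, -, κ, emb, a, b, ha, hb, heq⟩ :=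
      hstep (P i.val) (hinv i.val (le_of_lt i.isLt)).1 (hne' i.val i.isLt)
    exact ⟨κ, emb, a, b, ha, hb, heq⟩
end

section
/- Let ℓ ≥ 2, let G be a finite simple graph, and let F be an edition set for G such that G+F is a cluster graph. Define the edition set F̃ for G̃ by F̃ = { {(u,p),(v,q)} : {u,v} ∈ F, 1 ≤ p,q ≤ ℓ, p ≠ q }. Then |F̃| = ℓ(ℓ−1)·|F|, the graph G̃+F̃ equals the graph (G+F)̃ obtained by applying the tilde construction to G+F, and G̃+F̃ is a K_ℓ-cluster graph whose connected components are exactly the sets C × {1,…,ℓ} for the connected components C of G+F. -/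
open SimpleGraph

variable {V : Type*}

lemma tilde_adj (ℓ : ℕ) (H : SimpleGraph V) (a b : V × Fin ℓ) :
    (tilde ℓ H).Adj a b ↔ a.2 ≠ b.2 ∧ (a.1 = b.1 ∨ H.Adj a.1 b.1) := Iff.rfl

lemma editGraph_adj (G : SimpleGraph V) (F : Finset (Sym2 V)) (u v : V) :
    (editGraph G F).Adj u v ↔
      u ≠ v ∧ Xor' (G.Adj u v) (s(u,v) ∈ F) := by
  simp only [editGraph, fromEdgeSet_adj, Set.mem_symmDiff, mem_edgeSet,
    Finset.mem_coe, Xor']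
  tauto

lemma mem_liftEdition [Fintype V] [DecidableEq V] {ℓ : ℕ} (F : Finset (Sym2 V))
    (u v : V) (p q : Fin ℓ) :
    s((u,p),(v,q)) ∈ liftEdition ℓ F ↔ p ≠ q ∧ s(u,v) ∈ F := by
  simp only [liftEdition, Finset.mem_filter, Finset.mem_univ, true_and]
  constructor
  · rintro ⟨u', v', p', q', hpq, hFm, he⟩
    rw [Sym2.eq_iff] at he
    rcases he with ⟨h1, h2⟩ | ⟨h1, h2⟩ <;>
      rw [Prod.ext_iff] at h1 h2 <;>
      obtain ⟨rfl, rfl⟩ := h1 <;> obtain ⟨rfl, rfl⟩ := h2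
    · exact ⟨hpq, hFm⟩
    · exact ⟨hpq.symm, by rwa [Sym2.eq_swap]⟩
  · rintro ⟨hpq, hFm⟩
    exact ⟨u, v, p, q, hpq, hFm, rfl⟩

lemma tilde_walk_reach {ℓ : ℕ} (H : SimpleGraph V) :
    ∀ {a b : V × Fin ℓ}, (tilde ℓ H).Walk a b → H.Reachable a.1 b.1 := by
  intro a b w
  induction w with
  | nil => exact Reachable.refl _
  | cons h _ ih =>
    rcases h.2 with h' | h'
    · exact h' ▸ ih
    · exact h'.reachable.trans ih

lemma tilde_reach_of {ℓ : ℕ} (hℓ : 2 ≤ ℓ) (H : SimpleGraph V) :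
    ∀ {u v : V}, H.Walk u v → ∀ p q : Fin ℓ,
      (tilde ℓ H).Reachable (u,p) (v,q) := by
  have hsame : ∀ (x : V) (p q : Fin ℓ), (tilde ℓ H).Reachable (x,p) (x,q) := by
    intro x p q
    rcases eq_or_ne p q with rfl | hpq
    · exact Reachable.refl _
    · exact SimpleGraph.Adj.reachable ⟨hpq, Or.inl rfl⟩
  intro u v w
  induction w with
  | nil => exact fun p q => hsame _ p q
  | @cons u c v h w ih =>
    intro p q
    obtain ⟨p', hp'⟩ : ∃ p' : Fin ℓ, p' ≠ p :=
      Fintype.exists_ne_of_one_lt_card (by simp only [Fintype.card_fin]; omega) p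
    exact (SimpleGraph.Adj.reachable
      (⟨hp'.symm, Or.inr h⟩ : (tilde ℓ H).Adj (u,p) (c,p'))).trans (ih p' q)

lemma tilde_reach_iff {ℓ : ℕ} (hℓ : 2 ≤ ℓ) (H : SimpleGraph V)
    (u v : V) (p q : Fin ℓ) :
    (tilde ℓ H).Reachable (u,p) (v,q) ↔ H.Reachable u v := by
  constructor
  · intro h
    obtain ⟨w⟩ := h
    exact tilde_walk_reach H w
  · intro h
    obtain ⟨w⟩ := h
    exact tilde_reach_of hℓ H w p q

lemma tilde_supp {ℓ : ℕ} (hℓ : 2 ≤ ℓ) (H : SimpleGraph V) (u : V) (p : Fin ℓ) :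
    ((tilde ℓ H).connectedComponentMk (u,p)).supp
      = (H.connectedComponentMk u).supp ×ˢ (Set.univ : Set (Fin ℓ)) := by
  ext ⟨v, q⟩
  simp only [ConnectedComponent.mem_supp_iff, Set.mem_prod, Set.mem_univ, and_true,
    ConnectedComponent.eq]
  exact tilde_reach_iff hℓ H v u q p

lemma liftEdition_card [Fintype V] [DecidableEq V] {ℓ : ℕ} (F : Finset (Sym2 V))
    (hF : IsEditionSet F) :
    (liftEdition ℓ F).card = ℓ * (ℓ - 1) * F.card := by
  classical
  rw [Finset.card_eq_sum_card_fiberwise (f := Sym2.map Prod.fst) (t := F) ?_]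
  · rw [Finset.sum_const_nat (m := ℓ * (ℓ - 1)) ?_, mul_comm]
    intro e he
    have hne : ¬ e.IsDiag := hF e he
    revert he hne
    induction e using Sym2.ind with
    | _ u v =>
      intro he hne
      rw [Sym2.mk_isDiag_iff] at hne
      have himg : (liftEdition ℓ F).filter (fun a => Sym2.map Prod.fst a = s(u,v))
          = (Finset.univ.offDiag : Finset (Fin ℓ × Fin ℓ)).image
              (fun pq => s((u,pq.1),(v,pq.2))) := by
        ext a
        simp only [Finset.mem_filter, Finset.mem_image, Finset.mem_offDiag,
          Finset.mem_univ, true_and]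
        constructor
        · rintro ⟨ha, hmap⟩
          simp only [liftEdition, Finset.mem_filter, Finset.mem_univ, true_and] at ha
          obtain ⟨u', v', p', q', hpq, hFm, rfl⟩ := ha
          simp only [Sym2.map_pair_eq] at hmap
          rw [Sym2.eq_iff] at hmap
          rcases hmap with ⟨rfl, rfl⟩ | ⟨rfl, rfl⟩
          · exact ⟨(p', q'), hpq, rfl⟩
          · exact ⟨(q', p'), hpq.symm, Sym2.eq_swap⟩
        · rintro ⟨⟨p, q⟩, hpq, rfl⟩
          exact ⟨(mem_liftEdition F u v p q).mpr ⟨hpq, he⟩, by simp⟩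
      rw [himg, Finset.card_image_of_injOn, Finset.offDiag_card]
      · simp only [Finset.card_univ, Fintype.card_fin]
        rw [← Nat.mul_pred]
        rfl
      · rintro ⟨p, q⟩ h1 ⟨p', q'⟩ h2 he
        simp only at he
        rw [Sym2.eq_iff] at he
        rcases he with ⟨h1', h2'⟩ | ⟨h1', h2'⟩ <;>
          rw [Prod.ext_iff] at h1' h2'
        · exact Prod.ext h1'.2 h2'.2
        · exact absurd h1'.1 hne
  · intro e he
    simp only [Finset.mem_coe, liftEdition, Finset.mem_filter, Finset.mem_univ, true_and] at he
    obtain ⟨u, v, p, q, hpq, hFm, rfl⟩ := he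
    simpa using hFm

lemma editGraph_tilde_eq [Fintype V] [DecidableEq V] {ℓ : ℕ}
    (G : SimpleGraph V) (F : Finset (Sym2 V)) (hF : IsEditionSet F) :
    editGraph (tilde ℓ G) (liftEdition ℓ F) = tilde ℓ (editGraph G F) := by
  have hdiag : ∀ w : V, s(w,w) ∉ F := fun w h => hF _ h (Sym2.mk_isDiag_iff.mpr rfl)
  ext ⟨u,p⟩ ⟨v,q⟩
  rw [editGraph_adj, mem_liftEdition, tilde_adj, tilde_adj, editGraph_adj]
  by_cases hpq : p = q
  · subst hpq; simp [Xor']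
  · by_cases huv : u = v
    · subst huv
      simp [Xor', hpq, hdiag u, Prod.ext_iff]
    · simp only [Xor', Xor, Prod.ext_iff, ne_eq]
      constructor
      · rintro ⟨-, h⟩
        refine ⟨hpq, Or.inr ⟨huv, ?_⟩⟩
        tauto
      · rintro ⟨-, h⟩
        refine ⟨fun hc => hpq hc.2, ?_⟩
        rcases h with h | ⟨-, h⟩
        · exact absurd h huv
        · tauto

lemma tilde_induce_connected {ℓ : ℕ} (hℓ : 2 ≤ ℓ) (H : SimpleGraph V)
    (hclu : IsCluster H) (c' : (tilde ℓ H).ConnectedComponent) :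
    ((tilde ℓ H).induce c'.supp).Connected := by
  induction c' using SimpleGraph.ConnectedComponent.ind with
  | _ z =>
  obtain ⟨u, p⟩ := z
  set S := ((tilde ℓ H).connectedComponentMk (u,p)).supp with hSdef
  have hS : S = (H.connectedComponentMk u).supp ×ˢ (Set.univ : Set (Fin ℓ)) :=
    tilde_supp hℓ H u p
  have hmem : ∀ (x : V) (px : Fin ℓ), (x,px) ∈ S →
      x ∈ (H.connectedComponentMk u).supp := by
    intro x px hx; rw [hS] at hx; exact hx.1
  have hmem' : ∀ (x : V), x ∈ (H.connectedComponentMk u).supp →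
      ∀ px : Fin ℓ, (x,px) ∈ S := by
    intro x hx px; rw [hS]; exact ⟨hx, trivial⟩
  have hadj : ∀ (x y : V) (px py : Fin ℓ) (hx : (x,px) ∈ S) (hy : (y,py) ∈ S),
      px ≠ py → ((tilde ℓ H).induce S).Adj ⟨(x,px),hx⟩ ⟨(y,py),hy⟩ := by
    intro x y px py hx hy hp
    show (tilde ℓ H).Adj (x,px) (y,py)
    refine ⟨hp, ?_⟩
    rcases eq_or_ne x y with rfl | hxy
    · exact Or.inl rfl
    · exact Or.inr (hclu _ (hmem x px hx) (hmem y py hy) hxy)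
  have hpre : ((tilde ℓ H).induce S).Preconnected := by
    rintro ⟨⟨x,px⟩, hx⟩ ⟨⟨y,py⟩, hy⟩
    rcases eq_or_ne px py with rfl | hp
    · rcases eq_or_ne x y with rfl | hxy
      · exact Reachable.refl _
      · obtain ⟨p', hp'⟩ : ∃ p' : Fin ℓ, p' ≠ px :=
          Fintype.exists_ne_of_one_lt_card (by simp only [Fintype.card_fin]; omega) px
        have hm : (x, p') ∈ S := hmem' x (hmem x px hx) p'
        exact ((hadj x x px p' hx hm hp'.symm).reachable).trans
          ((hadj x y p' px hm hy hp').reachable)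
    · exact (hadj x y px py hx hy hp).reachable
  haveI : Nonempty S := ⟨⟨(u,p), (ConnectedComponent.mem_supp_iff _ _).mpr rfl⟩⟩
  exact ⟨hpre⟩

/-- If `G + F` is a cluster graph then the lifted edition set `F̃` has size `ℓ(ℓ-1)·|F|`,
`G̃ + F̃ = (G+F)̃`, and `G̃ + F̃` is a `K_ℓ`-cluster graph whose connected components are
exactly the sets `C × {1,…,ℓ}` for the connected components `C` of `G + F`. -/
theorem liftEdition_props [Fintype V] [DecidableEq V] (ℓ : ℕ) (hℓ : 2 ≤ ℓ)
    (G : SimpleGraph V) (F : Finset (Sym2 V)) (hF : IsEditionSet F)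
    (hclu : IsCluster (editGraph G F)) :
    (liftEdition ℓ F).card = ℓ * (ℓ - 1) * F.card ∧
    editGraph (tilde ℓ G) (liftEdition ℓ F) = tilde ℓ (editGraph G F) ∧
    IsKlCluster ℓ (editGraph (tilde ℓ G) (liftEdition ℓ F)) ∧
    (∀ c' : (editGraph (tilde ℓ G) (liftEdition ℓ F)).ConnectedComponent,
      ∃ c : (editGraph G F).ConnectedComponent,
        c'.supp = c.supp ×ˢ (Set.univ : Set (Fin ℓ))) ∧
    (∀ c : (editGraph G F).ConnectedComponent,
      ∃ c' : (editGraph (tilde ℓ G) (liftEdition ℓ F)).ConnectedComponent,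
        c'.supp = c.supp ×ˢ (Set.univ : Set (Fin ℓ))) := by
  have hEq := editGraph_tilde_eq (ℓ := ℓ) G F hF
  refine ⟨liftEdition_card F hF, hEq, ?_, ?_, ?_⟩
  · rw [hEq]
    intro c'
    induction c' using SimpleGraph.ConnectedComponent.ind with
    | _ z =>
    obtain ⟨u, p⟩ := z
    set H := editGraph G F with hH
    have hS : ((tilde ℓ H).connectedComponentMk (u,p)).supp
        = (H.connectedComponentMk u).supp ×ˢ (Set.univ : Set (Fin ℓ)) :=
      tilde_supp hℓ H u p
    refine ⟨tilde_induce_connected hℓ H hclu _, Prod.snd, ?_⟩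
    rintro ⟨x,px⟩ hx ⟨y,py⟩ hy hne
    rw [hS, Set.mem_prod] at hx hy
    rw [tilde_adj]
    constructor
    · exact fun h => h.1
    · intro h
      refine ⟨h, ?_⟩
      rcases eq_or_ne x y with rfl | hxy
      · exact Or.inl rfl
      · exact Or.inr (hclu _ hx.1 hy.1 hxy)
  · rw [hEq]
    intro c'
    induction c' using SimpleGraph.ConnectedComponent.ind with
    | _ z =>
    obtain ⟨u, p⟩ := z
    exact ⟨(editGraph G F).connectedComponentMk u, tilde_supp hℓ _ u p⟩
  · rw [hEq]
    intro c
    induction c using SimpleGraph.ConnectedComponent.ind with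
    | _ u =>
    exact ⟨(tilde ℓ (editGraph G F)).connectedComponentMk (u, ⟨0, by omega⟩),
      tilde_supp hℓ _ u _⟩
end

section
/- Let G be a finite simple graph, let F be an edition set for G with |F| = 1, and let G' = G+F. Then U(G') ≤ U(G)+4, P(G') ≤ P(G)+2, S(G') ≤ S(G)+2, and Q(G') ≤ Q(G)+2. -/
open SimpleGraph

variable {V : Type*}

lemma IsTwinPair.symm' {G : SimpleGraph V} {x y : V} (h : IsTwinPair G x y) :
    IsTwinPair G y x :=
  ⟨h.1.symm, fun z hz1 hz2 => (h.2 z hz2 hz1).symm⟩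

lemma twin_trans {G : SimpleGraph V} {x y z : V} (h1 : IsTwinPair G x y)
    (h2 : IsTwinPair G y z) (hxz : x ≠ z) : IsTwinPair G x z := by
  refine ⟨hxz, fun w hwx hwz => ?_⟩
  by_cases hwy : w = y
  · subst hwy
    have e1 : G.Adj z x ↔ G.Adj z w := h1.2 z (Ne.symm hxz) (Ne.symm h2.1)
    have e2 : G.Adj x w ↔ G.Adj x z := h2.2 x h1.1 hxz
    have c1 : G.Adj x z ↔ G.Adj z x := SimpleGraph.adj_comm _ _ _
    have c2 : G.Adj w x ↔ G.Adj x w := SimpleGraph.adj_comm _ _ _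
    have c3 : G.Adj w z ↔ G.Adj z w := SimpleGraph.adj_comm _ _ _
    tauto
  · exact (h1.2 w hwx hwy).trans (h2.2 w hwy hwz)

lemma mem_twinClass_self (G : SimpleGraph V) (v : V) : v ∈ twinClass G v := Or.inl rfl

lemma twin_of_mem {G : SimpleGraph V} {v x y : V} (hx : x ∈ twinClass G v)
    (hy : y ∈ twinClass G v) (hxy : x ≠ y) : IsTwinPair G x y := by
  rcases hx with rfl | hx
  · rcases hy with rfl | hy
    · exact absurd rfl hxy
    · exact hy
  · rcases hy with rfl | hy
    · exact hx.symm'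
    · exact twin_trans hx.symm' hy hxy

lemma twinR_symm {G : SimpleGraph V} {v u : V} (h : u ∈ twinClass G v) :
    v ∈ twinClass G u := by
  rcases h with rfl | h
  · exact Or.inl rfl
  · exact Or.inr h.symm'

lemma twinR_trans {G : SimpleGraph V} {v w u : V} (h1 : w ∈ twinClass G v)
    (h2 : u ∈ twinClass G w) : u ∈ twinClass G v := by
  rcases h1 with rfl | h1
  · exact h2
  · rcases h2 with rfl | h2
    · exact Or.inr h1
    · by_cases huv : u = v
      · exact Or.inl huv
      · exact Or.inr (twin_trans h1 h2 (fun hh => huv hh.symm))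

lemma twinClass_eq_of_mem {G : SimpleGraph V} {v w : V} (h : w ∈ twinClass G v) :
    twinClass G v = twinClass G w :=
  Set.ext fun u => ⟨fun hu => twinR_trans (twinR_symm h) hu, fun hu => twinR_trans h hu⟩

lemma class_eq_of_mem {G : SimpleGraph V} {C : Set V} (hC : C ∈ twinClasses G)
    {v : V} (hv : v ∈ C) : C = twinClass G v := by
  rcases hC with ⟨u, rfl⟩
  exact twinClass_eq_of_mem hv

lemma adj_const {G : SimpleGraph V} {v x y x' y' : V} (hx : x ∈ twinClass G v)
    (hy : y ∈ twinClass G v) (hx' : x' ∈ twinClass G v) (hy' : y' ∈ twinClass G v)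
    (hxy : x ≠ y) (h : G.Adj x' y') : G.Adj x y := by
  obtain ⟨t, ht, htx, hadj⟩ : ∃ t, t ∈ twinClass G v ∧ t ≠ x ∧ G.Adj t x := by
    by_cases h1 : x = x'
    · subst h1; exact ⟨y', hy', h.ne', h.symm⟩
    · by_cases h2 : x = y'
      · subst h2; exact ⟨x', hx', h.ne, h⟩
      · have tw := twin_of_mem hy' hx (fun hh => h2 hh.symm)
        exact ⟨x', hx', fun hh => h1 hh.symm,
          (tw.2 x' h.ne (fun hh => h1 hh.symm)).mp h⟩
  by_cases h3 : y = t
  · subst h3; exact hadj.symm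
  · have tw := twin_of_mem ht hy (fun hh => h3 hh.symm)
    exact (tw.2 x (Ne.symm htx) hxy).mp hadj.symm


theorem quotient_bounds_aux [Finite V] (G G' : SimpleGraph V) (a b : V)
    (hadj : ∀ x y : V, s(x,y) ≠ s(a,b) → (G'.Adj x y ↔ G.Adj x y)) :
    Ucount G' ≤ Ucount G + 4 ∧ Pcount G' ≤ Pcount G + 2 ∧
    Scount G' ≤ Scount G + 2 ∧ Qcount G' ≤ Qcount G + 2 := by
  -- adjacency transfer when one endpoint avoids {a,b}
  have hadj' : ∀ x y : V, x ∉ ({a, b} : Set V) → (G'.Adj x y ↔ G.Adj x y) := by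
    intro x y hx
    refine hadj x y (fun h => hx ?_)
    rw [Sym2.eq_iff] at h
    rcases h with ⟨rfl, _⟩ | ⟨rfl, _⟩
    · exact Set.mem_insert _ _
    · exact Set.mem_insert_of_mem _ rfl
  have hadj'' : ∀ z x : V, x ∉ ({a, b} : Set V) → (G'.Adj z x ↔ G.Adj z x) := by
    intro z x hx
    rw [SimpleGraph.adj_comm, SimpleGraph.adj_comm G]
    exact hadj' x z hx
  -- twin transfer
  have twin_iff : ∀ x y : V, x ∉ ({a, b} : Set V) → y ∉ ({a, b} : Set V) →
      (IsTwinPair G x y ↔ IsTwinPair G' x y) := by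
    intro x y hx hy
    constructor
    · rintro ⟨hne, h⟩
      exact ⟨hne, fun z hz1 hz2 =>
        (hadj'' z x hx).trans ((h z hz1 hz2).trans (hadj'' z y hy).symm)⟩
    · rintro ⟨hne, h⟩
      exact ⟨hne, fun z hz1 hz2 =>
        (hadj'' z x hx).symm.trans ((h z hz1 hz2).trans (hadj'' z y hy))⟩
  -- the class transfer map
  set f : Set V → Set V :=
    fun C => {w | ∃ u, u ∈ C ∧ u ∉ ({a, b} : Set V) ∧ w ∈ twinClass G u} with hf
  have key : ∀ C ∈ twinClasses G', ∀ v ∈ C, v ∉ ({a, b} : Set V) →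
      f C = twinClass G v := by
    intro C hC v hv hv'
    ext w
    simp only [hf, Set.mem_setOf_eq]
    constructor
    · rintro ⟨u, huC, hu', hw⟩
      by_cases huv : u = v
      · subst huv; exact hw
      · have tw' : IsTwinPair G' u v := by
          rcases hC with ⟨c, rfl⟩
          exact twin_of_mem huC hv huv
        have tw : IsTwinPair G u v := (twin_iff u v hu' hv').mpr tw'
        exact twinR_trans (Or.inr tw.symm') hw
    · intro hw; exact ⟨v, hv, hv', hw⟩
  have injOn : Set.InjOn f {C ∈ twinClasses G' | ∃ v ∈ C, v ∉ ({a, b} : Set V)} := by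
    rintro C1 ⟨hC1, v1, hv1, hv1'⟩ C2 ⟨hC2, v2, hv2, hv2'⟩ heq
    have e1 := key C1 hC1 v1 hv1 hv1'
    have e2 := key C2 hC2 v2 hv2 hv2'
    have hcc : twinClass G v1 = twinClass G v2 := by rw [← e1, heq, e2]
    have hm : v2 ∈ twinClass G v1 := hcc ▸ mem_twinClass_self G v2
    have hc1 : C1 = twinClass G' v1 := class_eq_of_mem hC1 hv1
    have hc2 : C2 = twinClass G' v2 := class_eq_of_mem hC2 hv2
    by_cases hvv : v1 = v2
    · rw [hc1, hvv, ← hc2]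
    · have tw : IsTwinPair G v1 v2 := by
        rcases hm with h | h
        · exact absurd h.symm hvv
        · exact h
      have tw' := (twin_iff v1 v2 hv1' hv2').mp tw
      rw [hc1, hc2]
      exact twinClass_eq_of_mem (Or.inr tw')
  have pair_le : ({twinClass G' a, twinClass G' b} : Set (Set V)).ncard ≤ 2 := by
    refine le_trans (Set.ncard_insert_le _ _) ?_
    simp [Set.ncard_singleton]
  -- Q bound
  have hQ : Qcount G' ≤ Qcount G + 2 := by
    have cover : twinClasses G' ⊆
        {C ∈ twinClasses G' | ∃ v ∈ C, v ∉ ({a, b} : Set V)} ∪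
          {twinClass G' a, twinClass G' b} := by
      rintro C ⟨c, rfl⟩
      by_cases hc : c ∈ ({a, b} : Set V)
      · right
        simp only [Set.mem_insert_iff, Set.mem_singleton_iff] at hc ⊢
        rcases hc with rfl | rfl
        · exact Or.inl rfl
        · exact Or.inr rfl
      · exact Or.inl ⟨⟨c, rfl⟩, c, mem_twinClass_self G' c, hc⟩
    have maps : ∀ C ∈ {C ∈ twinClasses G' | ∃ v ∈ C, v ∉ ({a, b} : Set V)},
        f C ∈ twinClasses G := by
      rintro C ⟨hC, v, hv, hv'⟩
      rw [key C hC v hv hv']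
      exact ⟨v, rfl⟩
    calc Qcount G' ≤ ({C ∈ twinClasses G' | ∃ v ∈ C, v ∉ ({a, b} : Set V)} ∪
            ({twinClass G' a, twinClass G' b} : Set (Set V))).ncard :=
          Set.ncard_le_ncard cover (Set.toFinite _)
      _ ≤ {C ∈ twinClasses G' | ∃ v ∈ C, v ∉ ({a, b} : Set V)}.ncard +
            ({twinClass G' a, twinClass G' b} : Set (Set V)).ncard :=
          Set.ncard_union_le _ _
      _ ≤ Qcount G + 2 :=
          Nat.add_le_add
            (Set.ncard_le_ncard_of_injOn f maps injOn (Set.toFinite _)) pair_le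
  -- S bound
  have hS : Scount G' ≤ Scount G + 2 := by
    have cover : {C ∈ twinClasses G' | 2 ≤ C.ncard ∧
          ∀ x ∈ C, ∀ y ∈ C, x ≠ y → G'.Adj x y} ⊆
        {C ∈ twinClasses G' | (2 ≤ C.ncard ∧ ∀ x ∈ C, ∀ y ∈ C, x ≠ y → G'.Adj x y) ∧
            ∃ v ∈ C, ∃ w ∈ C, v ≠ w ∧ v ∉ ({a, b} : Set V) ∧ w ∉ ({a, b} : Set V)} ∪
          {twinClass G' a, twinClass G' b} := by
      rintro C ⟨hC, h2, hadjC⟩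
      obtain ⟨x, hxC, y, hyC, hxy⟩ := (Set.one_lt_ncard (Set.toFinite C)).mp h2
      by_cases hx : x ∈ ({a, b} : Set V)
      · right
        have := class_eq_of_mem hC hxC
        simp only [Set.mem_insert_iff, Set.mem_singleton_iff] at hx ⊢
        rcases hx with rfl | rfl
        · exact Or.inl this
        · exact Or.inr this
      · by_cases hy : y ∈ ({a, b} : Set V)
        · right
          have := class_eq_of_mem hC hyC
          simp only [Set.mem_insert_iff, Set.mem_singleton_iff] at hy ⊢
          rcases hy with rfl | rfl
          · exact Or.inl this
          · exact Or.inr this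
        · exact Or.inl ⟨hC, ⟨h2, hadjC⟩, x, hxC, y, hyC, hxy, hx, hy⟩
    have maps : ∀ C ∈ {C ∈ twinClasses G' | (2 ≤ C.ncard ∧
          ∀ x ∈ C, ∀ y ∈ C, x ≠ y → G'.Adj x y) ∧
          ∃ v ∈ C, ∃ w ∈ C, v ≠ w ∧ v ∉ ({a, b} : Set V) ∧ w ∉ ({a, b} : Set V)},
        f C ∈ {C ∈ twinClasses G | 2 ≤ C.ncard ∧
          ∀ x ∈ C, ∀ y ∈ C, x ≠ y → G.Adj x y} := by
      rintro C ⟨hC, ⟨h2, hadjC⟩, v, hvC, w, hwC, hvw, hv', hw'⟩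
      rw [key C hC v hvC hv']
      have hCq := class_eq_of_mem hC hvC
      have tw' : IsTwinPair G' v w :=
        twin_of_mem (mem_twinClass_self G' v) (hCq ▸ hwC) hvw
      have tw : IsTwinPair G v w := (twin_iff v w hv' hw').mpr tw'
      have hwv : w ∈ twinClass G v := Or.inr tw
      have hadjvw : G.Adj v w := (hadj' v w hv').mp (hadjC v hvC w hwC hvw)
      refine ⟨⟨v, rfl⟩, ?_, ?_⟩
      · exact (Set.one_lt_ncard (Set.toFinite _)).mpr
          ⟨v, mem_twinClass_self G v, w, hwv, tw.1⟩
      · intro x hx y hy hxy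
        exact adj_const hx hy (mem_twinClass_self G v) hwv hxy hadjvw
    have injOn' : Set.InjOn f {C ∈ twinClasses G' | (2 ≤ C.ncard ∧
          ∀ x ∈ C, ∀ y ∈ C, x ≠ y → G'.Adj x y) ∧
          ∃ v ∈ C, ∃ w ∈ C, v ≠ w ∧ v ∉ ({a, b} : Set V) ∧ w ∉ ({a, b} : Set V)} := by
      refine injOn.mono ?_
      rintro C ⟨hC, _, v, hvC, w, hwC, hvw, hv', hw'⟩
      exact ⟨hC, v, hvC, hv'⟩
    calc Scount G' ≤ _ := Set.ncard_le_ncard cover (Set.toFinite _)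
      _ ≤ _ := Set.ncard_union_le _ _
      _ ≤ Scount G + 2 :=
          Nat.add_le_add
            (Set.ncard_le_ncard_of_injOn f maps injOn' (Set.toFinite _)) pair_le
  -- P bound
  have hP : Pcount G' ≤ Pcount G + 2 := by
    have cover : {C ∈ twinClasses G' | 2 ≤ C.ncard ∧
          ∀ x ∈ C, ∀ y ∈ C, x ≠ y → ¬ G'.Adj x y} ⊆
        {C ∈ twinClasses G' | (2 ≤ C.ncard ∧ ∀ x ∈ C, ∀ y ∈ C, x ≠ y → ¬ G'.Adj x y) ∧
            ∃ v ∈ C, ∃ w ∈ C, v ≠ w ∧ v ∉ ({a, b} : Set V) ∧ w ∉ ({a, b} : Set V)} ∪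
          {twinClass G' a, twinClass G' b} := by
      rintro C ⟨hC, h2, hadjC⟩
      obtain ⟨x, hxC, y, hyC, hxy⟩ := (Set.one_lt_ncard (Set.toFinite C)).mp h2
      by_cases hx : x ∈ ({a, b} : Set V)
      · right
        have := class_eq_of_mem hC hxC
        simp only [Set.mem_insert_iff, Set.mem_singleton_iff] at hx ⊢
        rcases hx with rfl | rfl
        · exact Or.inl this
        · exact Or.inr this
      · by_cases hy : y ∈ ({a, b} : Set V)
        · right
          have := class_eq_of_mem hC hyC
          simp only [Set.mem_insert_iff, Set.mem_singleton_iff] at hy ⊢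
          rcases hy with rfl | rfl
          · exact Or.inl this
          · exact Or.inr this
        · exact Or.inl ⟨hC, ⟨h2, hadjC⟩, x, hxC, y, hyC, hxy, hx, hy⟩
    have maps : ∀ C ∈ {C ∈ twinClasses G' | (2 ≤ C.ncard ∧
          ∀ x ∈ C, ∀ y ∈ C, x ≠ y → ¬ G'.Adj x y) ∧
          ∃ v ∈ C, ∃ w ∈ C, v ≠ w ∧ v ∉ ({a, b} : Set V) ∧ w ∉ ({a, b} : Set V)},
        f C ∈ {C ∈ twinClasses G | 2 ≤ C.ncard ∧
          ∀ x ∈ C, ∀ y ∈ C, x ≠ y → ¬ G.Adj x y} := by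
      rintro C ⟨hC, ⟨h2, hadjC⟩, v, hvC, w, hwC, hvw, hv', hw'⟩
      rw [key C hC v hvC hv']
      have hCq := class_eq_of_mem hC hvC
      have tw' : IsTwinPair G' v w :=
        twin_of_mem (mem_twinClass_self G' v) (hCq ▸ hwC) hvw
      have tw : IsTwinPair G v w := (twin_iff v w hv' hw').mpr tw'
      have hwv : w ∈ twinClass G v := Or.inr tw
      have hadjvw : ¬ G.Adj v w := fun h =>
        hadjC v hvC w hwC hvw ((hadj' v w hv').mpr h)
      refine ⟨⟨v, rfl⟩, ?_, ?_⟩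
      · exact (Set.one_lt_ncard (Set.toFinite _)).mpr
          ⟨v, mem_twinClass_self G v, w, hwv, tw.1⟩
      · intro x hx y hy hxy hA
        exact hadjvw (adj_const (mem_twinClass_self G v) hwv hx hy tw.1 hA)
    have injOn' : Set.InjOn f {C ∈ twinClasses G' | (2 ≤ C.ncard ∧
          ∀ x ∈ C, ∀ y ∈ C, x ≠ y → ¬ G'.Adj x y) ∧
          ∃ v ∈ C, ∃ w ∈ C, v ≠ w ∧ v ∉ ({a, b} : Set V) ∧ w ∉ ({a, b} : Set V)} := by
      refine injOn.mono ?_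
      rintro C ⟨hC, _, v, hvC, w, hwC, hvw, hv', hw'⟩
      exact ⟨hC, v, hvC, hv'⟩
    calc Pcount G' ≤ _ := Set.ncard_le_ncard cover (Set.toFinite _)
      _ ≤ _ := Set.ncard_union_le _ _
      _ ≤ Pcount G + 2 :=
          Nat.add_le_add
            (Set.ncard_le_ncard_of_injOn f maps injOn' (Set.toFinite _)) pair_le
  -- U bound
  have hU : Ucount G' ≤ Ucount G + 4 := by
    have hSa : ∀ c : V, ({C : Set V | ∃ v, C = {v} ∧ v ∉ ({a, b} : Set V) ∧
        v ∈ twinClass G c ∧ twinClass G' v = {v}}).Subsingleton := by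
      intro c
      rintro C ⟨v, rfl, hv', hva, hCv⟩ C' ⟨v2, rfl, hv2', hv2a, hCv2⟩
      by_cases hvv : v = v2
      · rw [hvv]
      · have tw : IsTwinPair G v v2 := twin_of_mem hva hv2a hvv
        have tw' := (twin_iff v v2 hv' hv2').mp tw
        have hm : v2 ∈ twinClass G' v := Or.inr tw'
        rw [hCv] at hm
        exact absurd hm.symm hvv
    have cover : {C ∈ twinClasses G' | C.Subsingleton} ⊆
        ({C ∈ twinClasses G' | C.Subsingleton} ∩ {C ∈ twinClasses G | C.Subsingleton}) ∪
        (({twinClass G' a, twinClass G' b} : Set (Set V)) ∪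
          ({C : Set V | ∃ v, C = {v} ∧ v ∉ ({a, b} : Set V) ∧
              v ∈ twinClass G a ∧ twinClass G' v = {v}} ∪
           {C : Set V | ∃ v, C = {v} ∧ v ∉ ({a, b} : Set V) ∧
              v ∈ twinClass G b ∧ twinClass G' v = {v}})) := by
      rintro C ⟨hC, hsub⟩
      obtain ⟨c, rfl⟩ := hC
      have hCc : twinClass G' c = {c} :=
        hsub.eq_singleton_of_mem (mem_twinClass_self G' c)
      by_cases hc : c ∈ ({a, b} : Set V)
      · right; left
        simp only [Set.mem_insert_iff, Set.mem_singleton_iff] at hc ⊢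
        rcases hc with rfl | rfl
        · exact Or.inl rfl
        · exact Or.inr rfl
      · by_cases hGc : twinClass G c = {c}
        · left
          exact ⟨⟨⟨c, rfl⟩, hsub⟩, ⟨c, hGc.trans hCc.symm⟩, hsub⟩
        · have hex : ∃ w, w ∈ twinClass G c ∧ w ≠ c := by
            by_contra hcon
            push_neg at hcon
            exact hGc (Set.eq_singleton_iff_unique_mem.mpr
              ⟨mem_twinClass_self G c, fun w hw => hcon w hw⟩)
          obtain ⟨w, hw, hwc⟩ := hex
          have tw : IsTwinPair G c w :=
            twin_of_mem (mem_twinClass_self G c) hw (Ne.symm hwc)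
          have hwab : w ∈ ({a, b} : Set V) := by
            by_contra hw'
            have tw' := (twin_iff c w hc hw').mp tw
            have hm : w ∈ twinClass G' c := Or.inr tw'
            rw [hCc] at hm
            exact hwc hm
          right; right
          have hcw : c ∈ twinClass G w := twinR_symm hw
          simp only [Set.mem_insert_iff, Set.mem_singleton_iff] at hwab
          rcases hwab with rfl | rfl
          · exact Or.inl ⟨c, hCc, hc, hcw, hCc⟩
          · exact Or.inr ⟨c, hCc, hc, hcw, hCc⟩
    refine le_trans (Set.ncard_le_ncard cover (Set.toFinite _)) ?_
    refine le_trans (Set.ncard_union_le _ _) ?_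
    have h1 : ({C ∈ twinClasses G' | C.Subsingleton} ∩
        {C ∈ twinClasses G | C.Subsingleton}).ncard ≤ Ucount G :=
      Set.ncard_le_ncard Set.inter_subset_right (Set.toFinite _)
    have h2 : (({twinClass G' a, twinClass G' b} : Set (Set V)) ∪
        ({C : Set V | ∃ v, C = {v} ∧ v ∉ ({a, b} : Set V) ∧
            v ∈ twinClass G a ∧ twinClass G' v = {v}} ∪
         {C : Set V | ∃ v, C = {v} ∧ v ∉ ({a, b} : Set V) ∧
            v ∈ twinClass G b ∧ twinClass G' v = {v}})).ncard ≤ 4 := by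
      refine le_trans (Set.ncard_union_le _ _) ?_
      have h3 := Set.ncard_union_le
        {C : Set V | ∃ v, C = {v} ∧ v ∉ ({a, b} : Set V) ∧
            v ∈ twinClass G a ∧ twinClass G' v = {v}}
        {C : Set V | ∃ v, C = {v} ∧ v ∉ ({a, b} : Set V) ∧
            v ∈ twinClass G b ∧ twinClass G' v = {v}}
      have ha := (Set.ncard_le_one (Set.toFinite _)).mpr
        (fun x hx y hy => hSa a hx hy)
      have hb := (Set.ncard_le_one (Set.toFinite _)).mpr
        (fun x hx y hy => hSa b hx hy)
      omega
    omega
  exact ⟨hU, hP, hS, hQ⟩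

/-- Lemma 4: one edge edition increases the number of U-vertices by at most 4, the
numbers of P-vertices and S-vertices by at most 2 each, and the total number of twin
classes by at most 2. -/
theorem one_edition_quotient_bounds [Fintype V] (G : SimpleGraph V)
    (F : Finset (Sym2 V)) (hF : IsEditionSet F) (hcard : F.card = 1) :
    Ucount (editGraph G F) ≤ Ucount G + 4 ∧
    Pcount (editGraph G F) ≤ Pcount G + 2 ∧
    Scount (editGraph G F) ≤ Scount G + 2 ∧
    Qcount (editGraph G F) ≤ Qcount G + 2 := by
  obtain ⟨e, rfl⟩ := Finset.card_eq_one.mp hcard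
  have hd : ¬ e.IsDiag := hF e (Finset.mem_singleton_self e)
  clear hF hcard
  revert hd
  induction e using Sym2.ind with
  | _ a b =>
    intro hd
    have hab : a ≠ b := fun h => hd (by simp [h])
    have hadj : ∀ x y : V, s(x, y) ≠ s(a, b) →
        ((editGraph G {s(a, b)}).Adj x y ↔ G.Adj x y) := by
      intro x y hne
      simp only [editGraph, SimpleGraph.fromEdgeSet_adj, Finset.coe_singleton,
        Set.mem_symmDiff, Set.mem_singleton_iff]
      constructor
      · rintro ⟨⟨h1, _⟩ | ⟨h1, _⟩, hxy⟩
        · exact (SimpleGraph.mem_edgeSet G).mp h1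
        · exact absurd h1 hne
      · intro h
        exact ⟨Or.inl ⟨(SimpleGraph.mem_edgeSet G).mpr h, hne⟩, h.ne⟩
    exact quotient_bounds_aux G _ a b hadj
end
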